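/- arXiv:1404.7286 — 5 statements merged into one kernel-verified Lean document; each statement's English description precedes it below -/
import Mathlib

section
/- If G is a connected graph that is not regular, then its average degree is strictly less than its spectral radius, which is strictly less than its maximum degree: α(G) < ρ(G) < Δ(G). -/
open SimpleGraph Finset Matrix
open scoped Classical

/-- Spectral radius of a finite simple graph: the supremum of eigenvalues of its
adjacency matrix. -/
noncomputable def specRad {V : Type*} [Fintype V] (G : SimpleGraph V) : ℝ :=
  sSup {μ : ℝ | ∃ x : V → ℝ, x ≠ 0 ∧
    (Matrix.of fun i j => if G.Adj i j then (1 : ℝ) else 0) *ᵥ x = μ • x}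

/-- The square of a graph: join vertices at distance 1 or 2. -/
def gsq {V : Type*} (G : SimpleGraph V) : SimpleGraph V :=
  SimpleGraph.fromRel (fun a b => G.dist a b = 1 ∨ G.dist a b = 2)

/-- Coalescence `H₁(v) ∘ H₂(w)`: identify the vertex `v` of `H₁` with the vertex `w`
of `H₂` (the identified vertex is `Sum.inl v`). -/
def coal {V₁ V₂ : Type*} (H₁ : SimpleGraph V₁) (v : V₁) (H₂ : SimpleGraph V₂) (w : V₂) :
    SimpleGraph (V₁ ⊕ {x : V₂ // x ≠ w}) :=
  SimpleGraph.fromRel (fun a b =>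
    match a, b with
    | Sum.inl a, Sum.inl b => H₁.Adj a b
    | Sum.inl a, Sum.inr b => a = v ∧ H₂.Adj w b.1
    | Sum.inr a, Sum.inr b => H₂.Adj a.1 b.1
    | Sum.inr _, Sum.inl _ => False)

/-- The star on `n` vertices with center `0`. -/
def starGraph (n : ℕ) : SimpleGraph (Fin n) :=
  SimpleGraph.fromRel (fun a _ => a.val = 0)

/-- The star on a vertex set `V` centered at `u`. -/
def starAt {V : Type*} (u : V) : SimpleGraph V :=
  SimpleGraph.fromRel (fun a _ => a = u)

/-- A unicyclic graph: connected with exactly as many edges as vertices. -/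
def IsUnicyclic {V : Type*} [Fintype V] (G : SimpleGraph V) : Prop :=
  G.Connected ∧ G.edgeSet.ncard = Fintype.card V

/-- Degree of a vertex. -/
noncomputable def deg {V : Type*} [Fintype V] (G : SimpleGraph V) (v : V) : ℕ :=
  (Finset.univ.filter fun u => G.Adj v u).card

/-- Average degree of a finite graph, as a real number. -/
noncomputable def avgDeg {V : Type*} [Fintype V] (G : SimpleGraph V) : ℝ :=
  (∑ v, (deg G v : ℝ)) / Fintype.card V

/-- Maximum degree of a finite graph. -/
noncomputable def maxDeg {V : Type*} [Fintype V] (G : SimpleGraph V) : ℕ :=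
  Finset.univ.sup fun v => deg G v

lemma rayleigh_key {V : Type*} [Fintype V] [DecidableEq V] (A : Matrix V V ℝ)
    (hA : A.IsHermitian) (L : ℝ) (hL : ∀ i, hA.eigenvalues i ≤ L) (x : V → ℝ) :
    x ⬝ᵥ (A *ᵥ x) ≤ L * (x ⬝ᵥ x) ∧
      (x ⬝ᵥ (A *ᵥ x) = L * (x ⬝ᵥ x) → A *ᵥ x = L • x) := by
  classical
  set U : Matrix V V ℝ := (hA.eigenvectorUnitary : Matrix V V ℝ) with hU
  have hUW : U * star U = 1 := mem_unitaryGroup_iff.mp (hA.eigenvectorUnitary).2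
  set y : V → ℝ := star U *ᵥ x with hy
  have hxy : U *ᵥ y = x := by rw [hy, mulVec_mulVec, hUW, one_mulVec]
  have hdot : ∀ w : V → ℝ, x ⬝ᵥ (U *ᵥ w) = y ⬝ᵥ w := by
    intro w
    rw [dotProduct_mulVec]
    congr 1
    rw [hy, Matrix.star_eq_conjTranspose, conjTranspose_eq_transpose_of_trivial,
      mulVec_transpose]
  have hDy : diagonal (RCLike.ofReal ∘ hA.eigenvalues) *ᵥ y = fun i => hA.eigenvalues i * y i := by
    funext i
    rw [mulVec_diagonal]
    simp [RCLike.ofReal_real_eq_id]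
  have hAx2 : A *ᵥ x = U *ᵥ (fun i => hA.eigenvalues i * y i) := by
    conv_lhs => rw [hA.spectral_theorem, Unitary.conjStarAlgAut_apply]
    rw [← Matrix.mulVec_mulVec, ← Matrix.mulVec_mulVec, ← hy, hDy]
  have hxAx : x ⬝ᵥ (A *ᵥ x) = ∑ i, hA.eigenvalues i * (y i) ^ 2 := by
    rw [hAx2, hdot]
    simp only [dotProduct]
    exact Finset.sum_congr rfl fun i _ => by ring
  have hxx : x ⬝ᵥ x = ∑ i, (y i) ^ 2 := by
    have h := hdot y
    rw [hxy] at h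
    rw [h]
    simp only [dotProduct]
    exact Finset.sum_congr rfl fun i _ => by ring
  constructor
  · rw [hxAx, hxx, Finset.mul_sum]
    exact Finset.sum_le_sum fun i _ => mul_le_mul_of_nonneg_right (hL i) (sq_nonneg _)
  · intro heq
    rw [hxAx, hxx, Finset.mul_sum] at heq
    have hz : ∀ i ∈ Finset.univ, (L - hA.eigenvalues i) * (y i) ^ 2 = 0 := by
      rw [← Finset.sum_eq_zero_iff_of_nonneg
        (fun i _ => mul_nonneg (sub_nonneg.mpr (hL i)) (sq_nonneg _))]
      have : ∑ i, (L - hA.eigenvalues i) * y i ^ 2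
          = ∑ i, L * y i ^ 2 - ∑ i, hA.eigenvalues i * y i ^ 2 := by
        rw [← Finset.sum_sub_distrib]
        exact Finset.sum_congr rfl fun i _ => by ring
      rw [this, heq, sub_self]
    have hkey : ∀ i, hA.eigenvalues i * y i = L * y i := by
      intro i
      rcases mul_eq_zero.mp (hz i (Finset.mem_univ i)) with h | h
      · rw [sub_eq_zero.mp h]
      · rw [pow_eq_zero_iff (two_ne_zero)] at h
        rw [h, mul_zero, mul_zero]
    rw [hAx2]
    have : (fun i => hA.eigenvalues i * y i) = L • y := by
      funext i; simpa using hkey i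
    rw [this, mulVec_smul, hxy]

/-- A connected non-regular graph satisfies
`α(G) < ρ(G) < Δ(G)`. -/
theorem avgDeg_lt_specRad_lt_maxDeg {V : Type*} [Fintype V] (G : SimpleGraph V)
    (hG : G.Connected) (hreg : ¬ ∃ d, ∀ v, deg G v = d) :
    avgDeg G < specRad G ∧ specRad G < (maxDeg G : ℝ) := by
  classical
  haveI : Nonempty V := hG.nonempty
  set A : Matrix V V ℝ := G.adjMatrix ℝ with hAdef
  have hAmat : (Matrix.of fun i j => if G.Adj i j then (1 : ℝ) else 0) = A := by
    ext i j
    by_cases h : G.Adj i j <;> simp [h, hAdef]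
  have hA : A.IsHermitian := by
    rw [Matrix.IsHermitian, conjTranspose_eq_transpose_of_trivial]
    exact G.isSymm_adjMatrix
  set L : ℝ := Finset.univ.sup' Finset.univ_nonempty hA.eigenvalues with hLdef
  have hLub : ∀ i, hA.eigenvalues i ≤ L := fun i => Finset.le_sup' _ (Finset.mem_univ i)
  -- degrees
  have hdeg : ∀ v, (G.neighborFinset v).card = deg G v := by
    intro v
    rw [SimpleGraph.neighborFinset_eq_filter]
    rfl
  have hones : A *ᵥ (fun _ => (1 : ℝ)) = fun v => (deg G v : ℝ) := by
    funext v
    rw [hAdef, SimpleGraph.adjMatrix_mulVec_apply]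
    simp [hdeg v]
  -- the eigenvector for L
  obtain ⟨i₀, _, hi₀⟩ := Finset.exists_mem_eq_sup' (Finset.univ_nonempty (α := V)) hA.eigenvalues
  set x₀ : V → ℝ := ⇑(hA.eigenvectorBasis i₀) with hx₀def
  have hx₀ : x₀ ≠ 0 := by
    intro h0
    exact hA.eigenvectorBasis.orthonormal.ne_zero i₀ (by ext j; exact congrFun h0 j)
  have hx₀e : A *ᵥ x₀ = L • x₀ := by
    rw [hx₀def, hA.mulVec_eigenvectorBasis, hLdef, hi₀]
  -- the eigenvalue set
  set S : Set ℝ := {μ : ℝ | ∃ x : V → ℝ, x ≠ 0 ∧ A *ᵥ x = μ • x} with hSdef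
  have hmem : L ∈ S := ⟨x₀, hx₀, hx₀e⟩
  have hub : ∀ μ ∈ S, μ ≤ L := by
    rintro μ ⟨x, hx, hxe⟩
    have h1 := (rayleigh_key A hA L hLub x).1
    rw [hxe] at h1
    have hxx : 0 < x ⬝ᵥ x := by
      have h := Matrix.dotProduct_self_star_pos_iff (v := x)
      rw [star_trivial] at h
      exact h.mpr hx
    have h3 : x ⬝ᵥ (μ • x) = μ * (x ⬝ᵥ x) := by
      simp only [dotProduct, Pi.smul_apply, smul_eq_mul, Finset.mul_sum]
      exact Finset.sum_congr rfl fun i _ => by ring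
    rw [h3] at h1
    nlinarith [h1, hxx]
  have hspec : specRad G = L := by
    rw [specRad]
    have hset : {μ : ℝ | ∃ x : V → ℝ, x ≠ 0 ∧
        (Matrix.of fun i j => if G.Adj i j then (1 : ℝ) else 0) *ᵥ x = μ • x} = S := by
      rw [hAmat]
    rw [hset]
    exact le_antisymm (csSup_le ⟨L, hmem⟩ hub) (le_csSup ⟨L, hub⟩ hmem)
  have hn : (0 : ℝ) < Fintype.card V := by positivity
  -- average degree part
  have havg : avgDeg G < L := by
    have h1 : (fun _ => (1 : ℝ)) ⬝ᵥ (A *ᵥ fun _ => (1 : ℝ)) = ∑ v, (deg G v : ℝ) := by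
      rw [hones]
      simp [dotProduct]
    have h2 : ((fun _ => (1 : ℝ)) : V → ℝ) ⬝ᵥ ((fun _ => (1 : ℝ)) : V → ℝ) = (Fintype.card V : ℝ) := by
      simp [dotProduct]
    have hle := (rayleigh_key A hA L hLub (fun _ => 1)).1
    rw [h1, h2] at hle
    have hne : ∑ v, (deg G v : ℝ) ≠ L * Fintype.card V := by
      intro heq
      have heig := (rayleigh_key A hA L hLub (fun _ => 1)).2 (by rw [h1, h2, heq])
      rw [hones] at heig
      apply hreg
      obtain ⟨v₀⟩ := ‹Nonempty V›
      refine ⟨deg G v₀, fun v => ?_⟩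
      have hv := congrFun heig v
      have hv₀ := congrFun heig v₀
      simp only [Pi.smul_apply, smul_eq_mul, mul_one] at hv hv₀
      exact_mod_cast hv.trans hv₀.symm
    rw [avgDeg, div_lt_iff₀ hn]
    exact lt_of_le_of_ne hle hne
  have hL0 : 0 ≤ L := by
    have : 0 ≤ avgDeg G := by
      rw [avgDeg]
      positivity
    linarith
  -- max degree part
  have hmax : L < (maxDeg G : ℝ) := by
    by_contra hcon
    push_neg at hcon
    set M : ℝ := Finset.univ.sup' Finset.univ_nonempty (fun v => |x₀ v|) with hMdef
    have hMub : ∀ v, |x₀ v| ≤ M := fun v => Finset.le_sup' (fun v => |x₀ v|) (Finset.mem_univ v)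
    have hM0 : 0 < M := by
      obtain ⟨v₀, hv₀⟩ := Function.ne_iff.mp hx₀
      exact lt_of_lt_of_le (abs_pos.mpr hv₀) (hMub v₀)
    -- the key step
    have step : ∀ v, |x₀ v| = M → deg G v = maxDeg G ∧ ∀ u, G.Adj v u → |x₀ u| = M := by
      intro v hv
      have hx₀v : (A *ᵥ x₀) v = ∑ u ∈ G.neighborFinset v, x₀ u := by
        rw [hAdef, SimpleGraph.adjMatrix_mulVec_apply]
      have habs : |∑ u ∈ G.neighborFinset v, x₀ u| = L * M := by
        rw [← hx₀v, hx₀e]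
        simp only [Pi.smul_apply, smul_eq_mul, abs_mul, abs_of_nonneg hL0, hv]
      have e1 : L * M ≤ ∑ u ∈ G.neighborFinset v, |x₀ u| := by
        rw [← habs]
        exact Finset.abs_sum_le_sum_abs _ _
      have e2 : ∑ u ∈ G.neighborFinset v, |x₀ u| ≤ (deg G v : ℝ) * M := by
        rw [← hdeg v]
        calc ∑ u ∈ G.neighborFinset v, |x₀ u| ≤ ∑ _u ∈ G.neighborFinset v, M :=
              Finset.sum_le_sum fun u _ => hMub u
          _ = (G.neighborFinset v).card * M := by rw [Finset.sum_const, nsmul_eq_mul]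
      have e3 : (deg G v : ℝ) * M ≤ (maxDeg G : ℝ) * M := by
        have : deg G v ≤ maxDeg G := Finset.le_sup (Finset.mem_univ v)
        exact mul_le_mul_of_nonneg_right (by exact_mod_cast this) hM0.le
      have e4 : (maxDeg G : ℝ) * M ≤ L * M := mul_le_mul_of_nonneg_right hcon hM0.le
      have q1 : ∑ u ∈ G.neighborFinset v, |x₀ u| = (deg G v : ℝ) * M := le_antisymm e2 (by linarith)
      have q2 : (deg G v : ℝ) = (maxDeg G : ℝ) := by
        have h5 : (deg G v : ℝ) * M = (maxDeg G : ℝ) * M := by linarith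
        exact mul_right_cancel₀ (ne_of_gt hM0) h5
      constructor
      · exact_mod_cast q2
      · intro u hu
        by_contra hne
        have hlt : |x₀ u| < M := lt_of_le_of_ne (hMub u) hne
        have : ∑ w ∈ G.neighborFinset v, |x₀ w| < ∑ _w ∈ G.neighborFinset v, M :=
          Finset.sum_lt_sum (fun w _ => hMub w)
            ⟨u, (SimpleGraph.mem_neighborFinset G v u).mpr hu, hlt⟩
        rw [Finset.sum_const, nsmul_eq_mul, hdeg v] at this
        linarith [q1]
    -- propagate along walks
    have hwalk : ∀ (a b : V), G.Walk a b → |x₀ a| = M → |x₀ b| = M := by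
      intro a b w
      induction w with
      | nil => exact id
      | cons h p ih => exact fun ha => ih ((step _ ha).2 _ h)
    obtain ⟨m, _, hm⟩ := Finset.exists_mem_eq_sup' (Finset.univ_nonempty (α := V))
      (fun v => |x₀ v|)
    apply hreg
    refine ⟨maxDeg G, fun v => ?_⟩
    obtain ⟨w⟩ := hG.preconnected m v
    exact (step v (hwalk m v w hm.symm)).1
  rw [hspec]
  exact ⟨havg, hmax⟩
end

section
/- Let G be a nontrivial connected graph with a vertex v, and T a nontrivial tree with a vertex u. Let S be the star on |V(T)| vertices with center u. Then ρ((G(v)∘T(u))²) ≤ ρ((G(v)∘S(u))²), with equality if and only if T is a star centered at u. -/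
open SimpleGraph Finset Matrix
open scoped Classical

section Spectral

variable {V : Type*} [Fintype V] [Nonempty V]

/-- eigenvalue set -/
def eigSet (A : Matrix V V ℝ) : Set ℝ :=
  {μ : ℝ | ∃ x : V → ℝ, x ≠ 0 ∧ A *ᵥ x = μ • x}

variable {A : Matrix V V ℝ} (hA : A.IsHermitian)

noncomputable def topEig (hA : A.IsHermitian) : ℝ :=
  Finset.univ.sup' Finset.univ_nonempty hA.eigenvalues

lemma inner_eq_dot (x y : EuclideanSpace ℝ V) : (inner ℝ x y : ℝ) = (x : V → ℝ) ⬝ᵥ (y : V → ℝ) := by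
  simp [PiLp.inner_apply, dotProduct, mul_comm]

lemma repr_mulVec (x : V → ℝ) (i : V) :
    hA.eigenvectorBasis.repr (WithLp.toLp 2 (A *ᵥ x)) i
      = hA.eigenvalues i * hA.eigenvectorBasis.repr (WithLp.toLp 2 x) i := by
  rw [OrthonormalBasis.repr_apply_apply, OrthonormalBasis.repr_apply_apply]
  rw [inner_eq_dot, inner_eq_dot]
  simp only [WithLp.ofLp_toLp]
  have h1 : (hA.eigenvectorBasis i : V → ℝ) ⬝ᵥ (A *ᵥ x) = (A *ᵥ (hA.eigenvectorBasis i : V → ℝ)) ⬝ᵥ x := by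
    rw [dotProduct_mulVec, ← mulVec_transpose]
    congr 1
    have := hA.eq
    rw [show Aᵀ = A from by ext a b; simpa using congrFun (congrFun hA.eq a) b]
  have h2 : A *ᵥ (hA.eigenvectorBasis i : V → ℝ)
      = hA.eigenvalues i • (hA.eigenvectorBasis i : V → ℝ) := hA.mulVec_eigenvectorBasis i
  rw [h1, h2, smul_dotProduct, smul_eq_mul]

lemma dot_expand (x y : V → ℝ) :
    x ⬝ᵥ y = ∑ i, hA.eigenvectorBasis.repr (WithLp.toLp 2 x) i * hA.eigenvectorBasis.repr (WithLp.toLp 2 y) i := by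
  have h := hA.eigenvectorBasis.repr.inner_map_map (WithLp.toLp 2 x) (WithLp.toLp 2 y)
  rw [inner_eq_dot, inner_eq_dot] at h
  simp only [WithLp.ofLp_toLp] at h
  rw [← h]
  simp [dotProduct]

lemma eig_mem (i : V) : hA.eigenvalues i ∈ eigSet A := by
  refine ⟨hA.eigenvectorBasis i, ?_, hA.mulVec_eigenvectorBasis i⟩
  intro h
  have := hA.eigenvectorBasis.orthonormal.1 i
  rw [show hA.eigenvectorBasis i = 0 from WithLp.ofLp_injective 2 h] at this
  simp at this

lemma eig_le_top {μ : ℝ} (hμ : μ ∈ eigSet A) : μ ≤ topEig hA := by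
  obtain ⟨x, hx, hAx⟩ := hμ
  have hrepr : hA.eigenvectorBasis.repr (WithLp.toLp 2 x) ≠ 0 := by
    simpa using hA.eigenvectorBasis.repr.map_eq_zero_iff.not.mpr (by simpa using hx : WithLp.toLp 2 x ≠ 0)
  obtain ⟨i, hi⟩ : ∃ i, hA.eigenvectorBasis.repr (WithLp.toLp 2 x) i ≠ 0 := by
    by_contra h; push_neg at h; exact hrepr (by ext i; simpa using h i)
  have h1 := repr_mulVec hA x i
  rw [hAx] at h1
  have h2 : hA.eigenvectorBasis.repr (WithLp.toLp 2 (μ • x)) i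
      = μ * hA.eigenvectorBasis.repr (WithLp.toLp 2 x) i := by
    have : WithLp.toLp 2 (μ • x) = μ • WithLp.toLp 2 x := rfl
    rw [this, _root_.map_smul]; rfl
  rw [h2] at h1
  have : hA.eigenvalues i = μ := mul_right_cancel₀ hi (by linarith)
  rw [← this]
  exact Finset.le_sup' _ (Finset.mem_univ i)

lemma sSup_eigSet : sSup (eigSet A) = topEig hA := by
  obtain ⟨i, _, hi⟩ := Finset.exists_mem_eq_sup' (Finset.univ_nonempty (α := V)) hA.eigenvalues
  refine le_antisymm (csSup_le ⟨_, eig_mem hA i⟩ (fun μ hμ => eig_le_top hA hμ)) ?_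
  have : topEig hA ∈ eigSet A := by rw [topEig, hi]; exact eig_mem hA i
  exact le_csSup ⟨topEig hA, fun μ hμ => eig_le_top hA hμ⟩ this

lemma rayleigh_le (z : V → ℝ) : z ⬝ᵥ (A *ᵥ z) ≤ topEig hA * (z ⬝ᵥ z) := by
  rw [dot_expand hA, dot_expand hA z z, Finset.mul_sum]
  refine Finset.sum_le_sum fun i _ => ?_
  rw [repr_mulVec hA]
  have h1 : hA.eigenvalues i ≤ topEig hA := Finset.le_sup' _ (Finset.mem_univ i)
  have h2 : (0:ℝ) ≤ hA.eigenvectorBasis.repr (WithLp.toLp 2 z) i * hA.eigenvectorBasis.repr (WithLp.toLp 2 z) i := mul_self_nonneg _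
  nlinarith [h2]

lemma rayleigh_eq (z : V → ℝ) (h : z ⬝ᵥ (A *ᵥ z) = topEig hA * (z ⬝ᵥ z)) :
    A *ᵥ z = topEig hA • z := by
  set c := fun i => hA.eigenvectorBasis.repr (WithLp.toLp 2 z) i with hc
  have key : ∀ i, (topEig hA - hA.eigenvalues i) * (c i * c i) = 0 := by
    have hsum : ∑ i, (topEig hA - hA.eigenvalues i) * (c i * c i) = 0 := by
      rw [dot_expand hA z (A *ᵥ z), dot_expand hA z z, Finset.mul_sum] at h
      simp only [repr_mulVec hA] at h
      have e : ∑ i, (topEig hA - hA.eigenvalues i) * (c i * c i)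
          = ∑ i, topEig hA * (hA.eigenvectorBasis.repr (WithLp.toLp 2 z) i * hA.eigenvectorBasis.repr (WithLp.toLp 2 z) i)
            - ∑ i, hA.eigenvectorBasis.repr (WithLp.toLp 2 z) i * (hA.eigenvalues i * hA.eigenvectorBasis.repr (WithLp.toLp 2 z) i) := by
        rw [← Finset.sum_sub_distrib]
        exact Finset.sum_congr rfl fun i _ => by simp only [hc]; ring
      rw [e, ← h, sub_self]
    intro i
    refine (Finset.sum_eq_zero_iff_of_nonneg fun j _ => ?_).mp hsum i (Finset.mem_univ i)
    have : hA.eigenvalues j ≤ topEig hA := Finset.le_sup' _ (Finset.mem_univ j)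
    nlinarith [mul_self_nonneg (c j)]
  apply WithLp.toLp_injective 2
  apply hA.eigenvectorBasis.repr.injective
  ext i
  have h1 := repr_mulVec hA z i
  have h2 : hA.eigenvectorBasis.repr (WithLp.toLp 2 (topEig hA • z)) i
      = topEig hA * c i := by
    have : WithLp.toLp 2 (topEig hA • z) = topEig hA • WithLp.toLp 2 z := rfl
    rw [this, _root_.map_smul]; rfl
  rw [h1, h2]
  have := key i
  rcases mul_eq_zero.mp this with h | h
  · nlinarith
  · have : c i = 0 := by nlinarith [sq_nonneg (c i)]
    rw [hc] at this ⊢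
    simp only [this]
    ring

end Spectral


section GraphSpec

variable {V : Type*} [Fintype V] [Nonempty V]

noncomputable def adjMx (G : SimpleGraph V) : Matrix V V ℝ :=
  Matrix.of fun i j => if G.Adj i j then (1 : ℝ) else 0

lemma adjMx_herm (G : SimpleGraph V) : (adjMx G).IsHermitian :=
  Matrix.ext fun i j => by
    simp [adjMx, Matrix.conjTranspose_apply, SimpleGraph.adj_comm]

lemma specRad_eq (G : SimpleGraph V) : specRad G = sSup (eigSet (adjMx G)) := rfl

lemma specRad_eq_topEig (G : SimpleGraph V) : specRad G = topEig (adjMx_herm G) := by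
  rw [specRad_eq, sSup_eigSet]

lemma top_mem (G : SimpleGraph V) : topEig (adjMx_herm G) ∈ eigSet (adjMx G) := by
  obtain ⟨i, _, hi⟩ := Finset.exists_mem_eq_sup' (Finset.univ_nonempty (α := V))
    (adjMx_herm G).eigenvalues
  rw [topEig, hi]
  exact eig_mem _ i

lemma dot_mulVec_sum (A : Matrix V V ℝ) (x y : V → ℝ) :
    x ⬝ᵥ (A *ᵥ y) = ∑ i, ∑ j, x i * (A i j * y j) := by
  simp [dotProduct, mulVec, Finset.mul_sum]

lemma adjMx_nonneg (G : SimpleGraph V) (i j : V) : 0 ≤ adjMx G i j := by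
  simp only [adjMx, Matrix.of_apply]; positivity

lemma adjMx_le {H₁ H₂ : SimpleGraph V} (h : H₁ ≤ H₂) (i j : V) :
    adjMx H₁ i j ≤ adjMx H₂ i j := by
  simp only [adjMx, Matrix.of_apply]
  by_cases h1 : H₁.Adj i j
  · rw [if_pos h1, if_pos (h h1)]
  · rw [if_neg h1]; positivity

lemma eigen_pos_of_connected {H : SimpleGraph V} (hc : H.Connected) {z : V → ℝ} {μ : ℝ}
    (hz0 : ∀ i, 0 ≤ z i) (hzne : z ≠ 0) (hev : adjMx H *ᵥ z = μ • z) : ∀ i, 0 < z i := by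
  have key : ∀ {a b : V}, H.Adj a b → 0 < z a → 0 < z b := by
    intro a b hab ha
    rcases (hz0 b).lt_or_eq with h | h
    · exact h
    · exfalso
      have h1 : (adjMx H *ᵥ z) b = 0 := by
        rw [hev]; simp [← h]
      have h2 : 0 < (adjMx H *ᵥ z) b := by
        rw [Matrix.mulVec, dotProduct]
        refine Finset.sum_pos' (fun j _ => mul_nonneg (adjMx_nonneg H b j) (hz0 j)) ⟨a, Finset.mem_univ a, ?_⟩
        have : adjMx H b a = 1 := by simp [adjMx, hab.symm]
        rw [this, one_mul]; exact ha
      rw [h1] at h2; exact lt_irrefl _ h2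
  obtain ⟨i₀, hi₀⟩ : ∃ i₀, z i₀ ≠ 0 := by
    by_contra hcon; push_neg at hcon; exact hzne (funext fun i => hcon i)
  have hi₀pos : 0 < z i₀ := (hz0 i₀).lt_of_ne (Ne.symm hi₀)
  have walkprop : ∀ {a b : V} (_ : H.Walk a b), 0 < z a → 0 < z b := by
    intro a b w
    induction w with
    | nil => exact id
    | cons hadj _ ih => exact fun ha => ih (key hadj ha)
  intro i
  obtain ⟨w⟩ := hc.preconnected i₀ i
  exact walkprop w hi₀pos

theorem specRad_mono_rigid {H₁ H₂ : SimpleGraph V} (h : H₁ ≤ H₂) (hc : H₂.Connected) :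
    specRad H₁ ≤ specRad H₂ ∧ (specRad H₁ = specRad H₂ → H₁ = H₂) := by
  obtain ⟨x, hx0, hAx⟩ := top_mem H₁
  set z : V → ℝ := fun i => |x i| with hzdef
  have hznn : ∀ i, 0 ≤ z i := fun i => abs_nonneg _
  have hzne : z ≠ 0 := by
    intro hcon
    apply hx0
    funext i
    have := congrFun hcon i
    simpa [hzdef, abs_eq_zero] using this
  have hzz : z ⬝ᵥ z = x ⬝ᵥ x := by
    simp [dotProduct, hzdef, abs_mul_abs_self]
  have hxxpos : 0 < x ⬝ᵥ x := by
    obtain ⟨i₀, hi₀⟩ : ∃ i₀, x i₀ ≠ 0 := by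
      by_contra hcon; push_neg at hcon; exact hx0 (funext fun i => hcon i)
    rw [dotProduct]
    exact Finset.sum_pos' (fun j _ => mul_self_nonneg _)
      ⟨i₀, Finset.mem_univ i₀, mul_self_pos.mpr hi₀⟩
  have step1 : x ⬝ᵥ (adjMx H₁ *ᵥ x) = topEig (adjMx_herm H₁) * (x ⬝ᵥ x) := by
    rw [hAx]; simp [dotProduct_smul]
  have step2 : x ⬝ᵥ (adjMx H₁ *ᵥ x) ≤ z ⬝ᵥ (adjMx H₁ *ᵥ z) := by
    rw [dot_mulVec_sum, dot_mulVec_sum]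
    refine Finset.sum_le_sum fun i _ => Finset.sum_le_sum fun j _ => ?_
    have h1 : x i * (adjMx H₁ i j * x j) ≤ |x i * (adjMx H₁ i j * x j)| := le_abs_self _
    have h2 : |x i * (adjMx H₁ i j * x j)| = z i * (adjMx H₁ i j * z j) := by
      rw [abs_mul, abs_mul, abs_of_nonneg (adjMx_nonneg H₁ i j)]
    linarith
  have step3 : z ⬝ᵥ (adjMx H₁ *ᵥ z) ≤ z ⬝ᵥ (adjMx H₂ *ᵥ z) := by
    rw [dot_mulVec_sum, dot_mulVec_sum]
    refine Finset.sum_le_sum fun i _ => Finset.sum_le_sum fun j _ => ?_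
    nlinarith [mul_nonneg (hznn i) (mul_nonneg (sub_nonneg.mpr (adjMx_le h i j)) (hznn j))]
  have step4 : z ⬝ᵥ (adjMx H₂ *ᵥ z) ≤ topEig (adjMx_herm H₂) * (z ⬝ᵥ z) := rayleigh_le (adjMx_herm H₂) z
  have hle : topEig (adjMx_herm H₁) ≤ topEig (adjMx_herm H₂) := by
    rw [hzz] at step4
    nlinarith
  constructor
  · rw [specRad_eq_topEig, specRad_eq_topEig]; exact hle
  · intro heq
    rw [specRad_eq_topEig, specRad_eq_topEig] at heq
    have e4 : z ⬝ᵥ (adjMx H₂ *ᵥ z) = topEig (adjMx_herm H₂) * (z ⬝ᵥ z) := by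
      rw [hzz]; rw [heq] at step1; rw [hzz] at step4; linarith
    have hBz : adjMx H₂ *ᵥ z = topEig (adjMx_herm H₂) • z := rayleigh_eq (adjMx_herm H₂) z e4
    have hzpos : ∀ i, 0 < z i := eigen_pos_of_connected hc hznn hzne hBz
    have e3 : z ⬝ᵥ (adjMx H₁ *ᵥ z) = z ⬝ᵥ (adjMx H₂ *ᵥ z) := by
      rw [e4, hzz]; rw [heq] at step1; rw [hzz] at e4 step4; linarith
    have hAB : ∀ i j, adjMx H₁ i j = adjMx H₂ i j := by
      rw [dot_mulVec_sum, dot_mulVec_sum] at e3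
      have houter := (Finset.sum_eq_sum_iff_of_le (fun i (_ : i ∈ Finset.univ) =>
        Finset.sum_le_sum fun j _ => by
          nlinarith [mul_nonneg (hznn i) (mul_nonneg (sub_nonneg.mpr (adjMx_le h i j)) (hznn j))])).mp e3
      intro i j
      have hinner := (Finset.sum_eq_sum_iff_of_le (fun j (_ : j ∈ Finset.univ) => by
          nlinarith [mul_nonneg (hznn i) (mul_nonneg (sub_nonneg.mpr (adjMx_le h i j)) (hznn j))])).mp
        (houter i (Finset.mem_univ i)) j (Finset.mem_univ j)
      have h5 := mul_left_cancel₀ (ne_of_gt (hzpos i)) hinner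
      exact mul_right_cancel₀ (ne_of_gt (hzpos j)) h5
    ext i j
    have h6 := hAB i j
    simp only [adjMx, Matrix.of_apply] at h6
    constructor
    · exact fun ha => h ha
    · intro hb
      by_contra ha
      rw [if_neg ha, if_pos hb] at h6
      norm_num at h6

end GraphSpec

section Comb

variable {V : Type*} {V₁ V₂ : Type*}

lemma walk_two {H : SimpleGraph V} {a b : V} (w : H.Walk a b) (hw : w.length = 2) :
    ∃ c, H.Adj a c ∧ H.Adj c b := by
  cases w with
  | nil => simp at hw
  | cons h p =>
    cases p with
    | nil => simp at hw
    | cons h2 q =>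
      cases q with
      | nil => exact ⟨_, h, h2⟩
      | cons h3 r => simp [SimpleGraph.Walk.length_cons] at hw

lemma gsq_adj (H : SimpleGraph V) (a b : V) :
    (gsq H).Adj a b ↔ a ≠ b ∧ (H.Adj a b ∨ ∃ w, H.Adj a w ∧ H.Adj w b) := by
  rw [gsq, SimpleGraph.fromRel_adj]
  constructor
  · rintro ⟨hne, h⟩
    refine ⟨hne, ?_⟩
    have h' : H.dist a b = 1 ∨ H.dist a b = 2 := by
      rcases h with h | h
      · exact h
      · rwa [SimpleGraph.dist_comm] at h
    rcases h' with h1 | h2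
    · exact Or.inl (SimpleGraph.dist_eq_one_iff_adj.mp h1)
    · have hreach : H.Reachable a b := by
        by_contra hr
        rw [SimpleGraph.dist_eq_zero_of_not_reachable hr] at h2; simp at h2
      obtain ⟨w, hw⟩ := hreach.exists_walk_length_eq_dist
      rw [h2] at hw
      exact Or.inr (walk_two w hw)
  · rintro ⟨hne, h⟩
    refine ⟨hne, Or.inl ?_⟩
    rcases h with h | ⟨c, h1, h2⟩
    · exact Or.inl (SimpleGraph.dist_eq_one_iff_adj.mpr h)
    · by_cases hadj : H.Adj a b
      · exact Or.inl (SimpleGraph.dist_eq_one_iff_adj.mpr hadj)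
      · right
        have hle : H.dist a b ≤ 2 := by
          have := SimpleGraph.dist_le (SimpleGraph.Walk.cons h1 (SimpleGraph.Walk.cons h2 SimpleGraph.Walk.nil))
          simpa using this
        have hne0 : H.dist a b ≠ 0 := by
          rw [Ne, SimpleGraph.dist_eq_zero_iff_eq_or_not_reachable]
          push_neg
          exact ⟨hne, ⟨(SimpleGraph.Walk.cons h1 (SimpleGraph.Walk.cons h2 SimpleGraph.Walk.nil))⟩⟩
        have hne1 : H.dist a b ≠ 1 := fun hc => hadj (SimpleGraph.dist_eq_one_iff_adj.mp hc)
        omega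

variable (H₁ : SimpleGraph V₁) (v : V₁) (H₂ : SimpleGraph V₂) (w : V₂)

lemma coal_adj_ll (a b : V₁) :
    (coal H₁ v H₂ w).Adj (Sum.inl a) (Sum.inl b) ↔ H₁.Adj a b := by
  rw [coal, SimpleGraph.fromRel_adj]
  constructor
  · rintro ⟨hne, h | h⟩
    · exact h
    · exact h.symm
  · exact fun h => ⟨by simp [h.ne], Or.inl h⟩

lemma coal_adj_lr (a : V₁) (b : {x : V₂ // x ≠ w}) :
    (coal H₁ v H₂ w).Adj (Sum.inl a) (Sum.inr b) ↔ a = v ∧ H₂.Adj w b.1 := by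
  rw [coal, SimpleGraph.fromRel_adj]
  constructor
  · rintro ⟨hne, h | h⟩
    · exact h
    · exact absurd h not_false
  · exact fun h => ⟨by simp, Or.inl h⟩

lemma coal_adj_rl (a : V₁) (b : {x : V₂ // x ≠ w}) :
    (coal H₁ v H₂ w).Adj (Sum.inr b) (Sum.inl a) ↔ a = v ∧ H₂.Adj w b.1 := by
  rw [SimpleGraph.adj_comm]; exact coal_adj_lr H₁ v H₂ w a b

lemma coal_adj_rr (a b : {x : V₂ // x ≠ w}) :
    (coal H₁ v H₂ w).Adj (Sum.inr a) (Sum.inr b) ↔ H₂.Adj a.1 b.1 := by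
  rw [coal, SimpleGraph.fromRel_adj]
  constructor
  · rintro ⟨hne, h | h⟩
    · exact h
    · exact h.symm
  · exact fun h => ⟨by simp [Subtype.ext_iff.not.mpr h.ne], Or.inl h⟩

lemma starAt_adj (u a b : V) : (starAt u).Adj a b ↔ a ≠ b ∧ (a = u ∨ b = u) := by
  rw [starAt, SimpleGraph.fromRel_adj]

end Comb

section Main

variable {V₁ V₂ : Type*} (G : SimpleGraph V₁) (v : V₁) (T : SimpleGraph V₂) (u : V₂)

lemma gsq_coal_le : gsq (coal G v T u) ≤ gsq (coal G v (starAt u) u) := by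
  intro x y hxy
  rw [gsq_adj] at hxy ⊢
  obtain ⟨hne, h⟩ := hxy
  refine ⟨hne, ?_⟩
  match x, y with
  | Sum.inl a, Sum.inl b =>
    rcases h with h | ⟨c, h1, h2⟩
    · exact Or.inl ((coal_adj_ll ..).mpr ((coal_adj_ll ..).mp h))
    · match c with
      | Sum.inl c =>
        exact Or.inr ⟨Sum.inl c, (coal_adj_ll ..).mpr ((coal_adj_ll ..).mp h1),
          (coal_adj_ll ..).mpr ((coal_adj_ll ..).mp h2)⟩
      | Sum.inr c =>
        obtain ⟨ha, -⟩ := (coal_adj_lr ..).mp h1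
        obtain ⟨hb, -⟩ := (coal_adj_rl ..).mp h2
        exact absurd (by rw [ha, hb]) hne
  | Sum.inl a, Sum.inr b =>
    have hbu : (starAt u).Adj u b.1 := (starAt_adj ..).mpr ⟨(Ne.symm b.2), Or.inl rfl⟩
    rcases h with h | ⟨c, h1, h2⟩
    · obtain ⟨ha, -⟩ := (coal_adj_lr ..).mp h
      exact Or.inl ((coal_adj_lr ..).mpr ⟨ha, hbu⟩)
    · match c with
      | Sum.inl c =>
        obtain ⟨hc, -⟩ := (coal_adj_lr ..).mp h2
        have hav : G.Adj a v := hc ▸ (coal_adj_ll ..).mp h1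
        exact Or.inr ⟨Sum.inl v, (coal_adj_ll ..).mpr hav, (coal_adj_lr ..).mpr ⟨rfl, hbu⟩⟩
      | Sum.inr c =>
        obtain ⟨ha, -⟩ := (coal_adj_lr ..).mp h1
        exact Or.inl ((coal_adj_lr ..).mpr ⟨ha, hbu⟩)
  | Sum.inr a, Sum.inl b =>
    have hau : (starAt u).Adj u a.1 := (starAt_adj ..).mpr ⟨(Ne.symm a.2), Or.inl rfl⟩
    rcases h with h | ⟨c, h1, h2⟩
    · obtain ⟨hb, -⟩ := (coal_adj_rl ..).mp h
      exact Or.inl ((coal_adj_rl ..).mpr ⟨hb, hau⟩)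
    · match c with
      | Sum.inl c =>
        obtain ⟨hc, -⟩ := (coal_adj_rl ..).mp h1
        have hbv : G.Adj b v := hc ▸ ((coal_adj_ll ..).mp h2).symm
        exact Or.inr ⟨Sum.inl v, (coal_adj_rl ..).mpr ⟨rfl, hau⟩, (coal_adj_ll ..).mpr hbv.symm⟩
      | Sum.inr c =>
        obtain ⟨hb, -⟩ := (coal_adj_rl ..).mp h2
        exact Or.inl ((coal_adj_rl ..).mpr ⟨hb, hau⟩)
  | Sum.inr a, Sum.inr b =>
    refine Or.inr ⟨Sum.inl v, (coal_adj_rl ..).mpr ⟨rfl, ?_⟩, (coal_adj_lr ..).mpr ⟨rfl, ?_⟩⟩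
    · exact (starAt_adj ..).mpr ⟨Ne.symm a.2, Or.inl rfl⟩
    · exact (starAt_adj ..).mpr ⟨Ne.symm b.2, Or.inl rfl⟩

lemma coal_star_connected (hG : G.Connected) : (coal G v (starAt u) u).Connected := by
  have hreach : ∀ x, (coal G v (starAt u) u).Reachable (Sum.inl v) x := by
    intro x
    match x with
    | Sum.inl a =>
      have key : ∀ {c d : V₁}, G.Reachable c d →
          (coal G v (starAt u) u).Reachable (Sum.inl c) (Sum.inl d) := by
        intro c d hr
        obtain ⟨p⟩ := hr
        induction p with
        | nil => exact SimpleGraph.Reachable.refl _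
        | cons hadj _ ih =>
          exact (SimpleGraph.Adj.reachable ((coal_adj_ll ..).mpr hadj)).trans ih
      exact key (hG.preconnected v a)
    | Sum.inr b =>
      exact SimpleGraph.Adj.reachable ((coal_adj_lr ..).mpr
        ⟨rfl, (starAt_adj ..).mpr ⟨Ne.symm b.2, Or.inl rfl⟩⟩)
  rw [SimpleGraph.connected_iff]
  exact ⟨fun x y => (hreach x).symm.trans (hreach y), ⟨Sum.inl v⟩⟩

lemma gsq_connected {W : Type*} {H : SimpleGraph W} (h : H.Connected) : (gsq H).Connected := by
  refine h.mono ?_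
  intro a b hab
  exact (gsq_adj ..).mpr ⟨hab.ne, Or.inl hab⟩

lemma exists_nbr [Fintype V₁] (hG : G.Connected) (hG1 : 1 < Fintype.card V₁) :
    ∃ a, G.Adj v a := by
  obtain ⟨wv, hwv⟩ := Fintype.exists_ne_of_one_lt_card hG1 v
  obtain ⟨p⟩ := hG.preconnected v wv
  cases p with
  | nil => exact absurd rfl (Ne.symm hwv)
  | cons hadj _ => exact ⟨_, hadj⟩

lemma T_eq_star [Fintype V₁] (hG : G.Connected) (hG1 : 1 < Fintype.card V₁)
    (hT : T.IsTree)
    (heq : gsq (coal G v T u) = gsq (coal G v (starAt u) u)) : T = starAt u := by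
  obtain ⟨a, hva⟩ := exists_nbr G v hG hG1
  have hav : a ≠ v := (hva.ne).symm
  have hstar : ∀ b : V₂, b ≠ u → T.Adj u b := by
    intro b hb
    by_contra hub
    have hS : (gsq (coal G v (starAt u) u)).Adj (Sum.inl a) (Sum.inr ⟨b, hb⟩) := by
      rw [gsq_adj]
      refine ⟨by simp, Or.inr ⟨Sum.inl v, (coal_adj_ll ..).mpr hva.symm,
        (coal_adj_lr ..).mpr ⟨rfl, (starAt_adj ..).mpr ⟨Ne.symm hb, Or.inl rfl⟩⟩⟩⟩
    rw [← heq, gsq_adj] at hS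
    obtain ⟨-, h | ⟨c, h1, h2⟩⟩ := hS
    · exact hav ((coal_adj_lr ..).mp h).1
    · match c with
      | Sum.inl c =>
        obtain ⟨-, hc2⟩ := (coal_adj_lr ..).mp h2
        exact hub hc2
      | Sum.inr c =>
        exact hav ((coal_adj_lr ..).mp h1).1
  ext a b
  rw [starAt_adj]
  constructor
  · intro hab
    refine ⟨hab.ne, ?_⟩
    by_contra hcon
    push_neg at hcon
    obtain ⟨hau, hbu⟩ := hcon
    have hq1 : (SimpleGraph.Walk.cons (hstar b hbu) SimpleGraph.Walk.nil : T.Walk u b).IsPath := by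
      rw [SimpleGraph.Walk.isPath_def]
      simp [(hstar b hbu).ne]
    have hq2 : (SimpleGraph.Walk.cons (hstar a hau)
        (SimpleGraph.Walk.cons hab SimpleGraph.Walk.nil) : T.Walk u b).IsPath := by
      rw [SimpleGraph.Walk.isPath_def]
      simp [(hstar a hau).ne, Ne.symm hbu, hab.ne]
    obtain ⟨p, -, hpu⟩ := hT.existsUnique_path u b
    have e := (hpu _ hq1).trans (hpu _ hq2).symm
    have hlen := congrArg SimpleGraph.Walk.length e
    simp [SimpleGraph.Walk.length_cons] at hlen
  · rintro ⟨hne, h | h⟩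
    · exact h ▸ hstar b (fun hbu => hne (h.trans hbu.symm))
    · exact h ▸ (hstar a (fun hau => hne (hau.trans h.symm))).symm

end Main

/-- Replacing a tree branch by a star at the same root does not
decrease the spectral radius of the square, with equality iff the tree was
already that star. -/
theorem specRad_sq_coal_tree_le_coal_star {V₁ V₂ : Type*} [Fintype V₁] [Fintype V₂]
    (G : SimpleGraph V₁) (hG : G.Connected) (hG1 : 1 < Fintype.card V₁) (v : V₁)
    (T : SimpleGraph V₂) (hT : T.IsTree) (hT1 : 1 < Fintype.card V₂) (u : V₂) :
    specRad (gsq (coal G v T u)) ≤ specRad (gsq (coal G v (starAt u) u)) ∧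
      (specRad (gsq (coal G v T u)) = specRad (gsq (coal G v (starAt u) u)) ↔
        T = starAt u) := by
  haveI : Nonempty V₁ := Fintype.card_pos_iff.mp (by omega)
  haveI : Nonempty (V₁ ⊕ {x : V₂ // x ≠ u}) := ⟨Sum.inl (Classical.arbitrary V₁)⟩
  have hle := gsq_coal_le G v T u
  have hconn := gsq_connected (coal_star_connected G v u hG)
  obtain ⟨h1, h2⟩ := specRad_mono_rigid hle hconn
  refine ⟨h1, ?_, ?_⟩
  · intro heq
    exact T_eq_star G v T u hG hG1 hT (h2 heq)
  · intro h
    rw [h]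
end

section
/- For every unicyclic graph U on n ≥ 3 vertices, ρ(U²) ≤ n−1, with equality if and only if the diameter of U is at most 2. -/
open SimpleGraph Finset Matrix
open scoped Classical

section Aux

variable {n : ℕ}

/-- The adjacency matrix used in `specRad`. -/
noncomputable def adjM (G : SimpleGraph (Fin n)) : Matrix (Fin n) (Fin n) ℝ :=
  Matrix.of fun i j => if G.Adj i j then (1 : ℝ) else 0

lemma adjM_mulVec_apply (G : SimpleGraph (Fin n)) (x : Fin n → ℝ) (i : Fin n) :
    (adjM G *ᵥ x) i = ∑ j, (if G.Adj i j then (1 : ℝ) else 0) * x j := by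
  simp [adjM, Matrix.mulVec, dotProduct]

lemma eig_abs_le (hn : 1 ≤ n) (G : SimpleGraph (Fin n)) {μ : ℝ} {x : Fin n → ℝ}
    (hx : x ≠ 0) (hAx : adjM G *ᵥ x = μ • x) : |μ| ≤ (n : ℝ) - 1 := by
  have : Nonempty (Fin n) := ⟨⟨0, hn⟩⟩
  obtain ⟨i, -, hi⟩ := Finset.exists_max_image (Finset.univ : Finset (Fin n))
    (fun j => |x j|) ⟨Classical.arbitrary _, Finset.mem_univ _⟩
  have hxi : 0 < |x i| := by
    obtain ⟨j, hj⟩ := Function.ne_iff.mp hx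
    simp only [Pi.zero_apply] at hj
    exact lt_of_lt_of_le (abs_pos.mpr hj) (hi j (Finset.mem_univ j))
  have heq : ∑ j, (if G.Adj i j then (1 : ℝ) else 0) * x j = μ * x i := by
    have := congrFun hAx i
    rw [adjM_mulVec_apply] at this
    simpa using this
  have h2 : ∑ j ∈ Finset.univ.erase i, |x i| = ((n : ℝ) - 1) * |x i| := by
    rw [Finset.sum_const, nsmul_eq_mul]
    congr 1
    rw [Finset.card_erase_of_mem (Finset.mem_univ i), Finset.card_univ, Fintype.card_fin,
      Nat.cast_sub hn, Nat.cast_one]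
  have hbound : |μ| * |x i| ≤ ((n : ℝ) - 1) * |x i| := by
    have h1 : |μ * x i| ≤ ∑ j ∈ Finset.univ.erase i, |x i| := by
      rw [← heq]
      calc |∑ j, (if G.Adj i j then (1 : ℝ) else 0) * x j|
          ≤ ∑ j, |(if G.Adj i j then (1 : ℝ) else 0) * x j| := Finset.abs_sum_le_sum_abs _ _
        _ = ∑ j ∈ Finset.univ.erase i, |(if G.Adj i j then (1 : ℝ) else 0) * x j| := by
            exact (Finset.sum_erase (f := fun j => |(if G.Adj i j then (1 : ℝ) else 0) * x j|)
              Finset.univ (by show |(if G.Adj i i then (1 : ℝ) else 0) * x i| = 0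
                              rw [if_neg (G.irrefl)]; simp)).symm
        _ ≤ ∑ j ∈ Finset.univ.erase i, |x i| := by
            apply Finset.sum_le_sum
            intro j hj
            by_cases h : G.Adj i j
            · simpa [h] using hi j (Finset.mem_univ j)
            · simp [h, abs_nonneg]
    rw [abs_mul] at h1
    rw [← h2]
    exact h1
  exact le_of_mul_le_mul_right hbound hxi

lemma eig_le (hn : 1 ≤ n) (G : SimpleGraph (Fin n)) {μ : ℝ} {x : Fin n → ℝ}
    (hx : x ≠ 0) (hAx : adjM G *ᵥ x = μ • x) : μ ≤ (n : ℝ) - 1 :=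
  (le_abs_self μ).trans (eig_abs_le hn G hx hAx)

lemma bddAbove_S (hn : 1 ≤ n) (G : SimpleGraph (Fin n)) :
    BddAbove {μ : ℝ | ∃ x : Fin n → ℝ, x ≠ 0 ∧ adjM G *ᵥ x = μ • x} :=
  ⟨(n : ℝ) - 1, fun _ ⟨x, hx, hAx⟩ => eig_le hn G hx hAx⟩

lemma S_finite (G : SimpleGraph (Fin n)) :
    {μ : ℝ | ∃ x : Fin n → ℝ, x ≠ 0 ∧ adjM G *ᵥ x = μ • x}.Finite := by
  apply Set.Finite.subset (Polynomial.finite_setOf_isRoot (adjM G).charpoly_monic.ne_zero)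
  rintro μ ⟨x, hx, hAx⟩
  have h0 : (adjM G - μ • 1) *ᵥ x = 0 := by
    rw [Matrix.sub_mulVec, Matrix.smul_mulVec, Matrix.one_mulVec, hAx, sub_self]
  have hdet : (adjM G - μ • 1).det = 0 := Matrix.exists_mulVec_eq_zero_iff.mp ⟨x, hx, h0⟩
  have hsc : (Matrix.scalar (Fin n)) μ = μ • (1 : Matrix (Fin n) (Fin n) ℝ) := by
    rw [Matrix.scalar_apply]
    ext a b
    by_cases h : a = b <;> simp [Matrix.diagonal, Matrix.one_apply, h]
  have heval : (adjM G).charpoly.eval μ = ((Matrix.scalar (Fin n)) μ - adjM G).det := by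
    rw [Matrix.charpoly, eval_det, Matrix.matPolyEquiv_charmatrix]
    simp
  show (adjM G).charpoly.IsRoot μ
  rw [Polynomial.IsRoot, heval, hsc, ← neg_sub, Matrix.det_neg, hdet, mul_zero]

/-- Rigidity: if `n-1` is an eigenvalue then the graph is complete. -/
lemma complete_of_eig (hn : 3 ≤ n) (G : SimpleGraph (Fin n)) {x : Fin n → ℝ}
    (hx : x ≠ 0) (hAx : adjM G *ᵥ x = ((n : ℝ) - 1) • x) :
    ∀ a b : Fin n, a ≠ b → G.Adj a b := by
  have hn1 : 1 ≤ n := by omega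
  have : Nonempty (Fin n) := ⟨⟨0, hn1⟩⟩
  have key : ∀ y : Fin n → ℝ, y ≠ 0 → adjM G *ᵥ y = ((n : ℝ) - 1) • y →
      (∃ i, 0 < y i ∧ ∀ j, y j ≤ y i) → ∀ a b : Fin n, a ≠ b → G.Adj a b := by
    rintro y hy hAy ⟨i, hipos, hmax⟩ a b hab
    have claim : ∀ v : Fin n, y v = y i → ∀ j, j ≠ v → G.Adj v j ∧ y j = y i := by
      intro v hv
      have heq : ∑ j, (if G.Adj v j then (1 : ℝ) else 0) * y j = ((n : ℝ) - 1) * y v := by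
        have := congrFun hAy v
        rw [adjM_mulVec_apply] at this
        simpa using this
      have heq2 : ∑ j ∈ Finset.univ.erase v, (if G.Adj v j then (1 : ℝ) else 0) * y j
          = ∑ j ∈ Finset.univ.erase v, y v := by
        rw [Finset.sum_erase (f := fun j => (if G.Adj v j then (1 : ℝ) else 0) * y j)
          Finset.univ (by show (if G.Adj v v then (1 : ℝ) else 0) * y v = 0
                          rw [if_neg (G.irrefl)]; ring), heq,
          Finset.sum_const, nsmul_eq_mul,
          Finset.card_erase_of_mem (Finset.mem_univ v), Finset.card_univ, Fintype.card_fin,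
          Nat.cast_sub hn1, Nat.cast_one]
      have hterm : ∀ j ∈ Finset.univ.erase v,
          (if G.Adj v j then (1 : ℝ) else 0) * y j ≤ y v := by
        intro j hj
        by_cases h : G.Adj v j
        · simpa [h, hv] using hmax j
        · rw [if_neg h, zero_mul, hv]
          exact le_of_lt hipos
      have hall : ∀ j ∈ Finset.univ.erase v,
          (if G.Adj v j then (1 : ℝ) else 0) * y j = y v := by
        by_contra hcon
        push_neg at hcon
        obtain ⟨j, hj, hjne⟩ := hcon
        have : ∑ j ∈ Finset.univ.erase v, (if G.Adj v j then (1 : ℝ) else 0) * y j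
            < ∑ j ∈ Finset.univ.erase v, y v :=
          Finset.sum_lt_sum hterm ⟨j, hj, lt_of_le_of_ne (hterm j hj) hjne⟩
        exact absurd heq2 (ne_of_lt this)
      intro j hjv
      have hj := hall j (Finset.mem_erase.mpr ⟨hjv, Finset.mem_univ j⟩)
      by_cases h : G.Adj v j
      · refine ⟨h, ?_⟩
        rw [if_pos h, one_mul] at hj
        rw [hj, hv]
      · rw [if_neg h, zero_mul] at hj
        exfalso
        rw [hv] at hj
        exact absurd hj.symm (ne_of_gt hipos)
    have hconst : ∀ j : Fin n, y j = y i := by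
      intro j
      by_cases h : j = i
      · rw [h]
      · exact (claim i rfl j h).2
    exact (claim a (hconst a) b (Ne.symm hab)).1
  obtain ⟨i, -, hi⟩ := Finset.exists_max_image (Finset.univ : Finset (Fin n))
    x ⟨Classical.arbitrary _, Finset.mem_univ _⟩
  by_cases hpos : 0 < x i
  · exact key x hx hAx ⟨i, hpos, fun j => hi j (Finset.mem_univ j)⟩
  · have hnx : (-x) ≠ 0 := fun h => hx (by simpa using congrArg Neg.neg h)
    have hAnx : adjM G *ᵥ (-x) = ((n : ℝ) - 1) • (-x) := by
      rw [Matrix.mulVec_neg, hAx, smul_neg]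
    obtain ⟨k, -, hk⟩ := Finset.exists_max_image (Finset.univ : Finset (Fin n))
      (fun j => -x j) ⟨Classical.arbitrary _, Finset.mem_univ _⟩
    have hkpos : 0 < -x k := by
      obtain ⟨j, hj⟩ := Function.ne_iff.mp hx
      simp only [Pi.zero_apply] at hj
      rcases lt_or_gt_of_ne hj with h | h
      · exact lt_of_lt_of_le (by linarith) (hk j (Finset.mem_univ j))
      · exact absurd (lt_of_lt_of_le h (hi j (Finset.mem_univ j))) hpos
    exact key (-x) hnx hAnx ⟨k, hkpos, fun j => hk j (Finset.mem_univ j)⟩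

end Aux

/-- For a unicyclic graph `U` on `n ≥ 3` vertices,
`ρ(U²) ≤ n - 1`, with equality iff the diameter of `U` is at most 2. -/
theorem specRad_sq_unicyclic_le {n : ℕ} (hn : 3 ≤ n) (U : SimpleGraph (Fin n))
    (hU : IsUnicyclic U) :
    specRad (gsq U) ≤ (n : ℝ) - 1 ∧
      (specRad (gsq U) = (n : ℝ) - 1 ↔ U.diam ≤ 2) := by
  have hn1 : 1 ≤ n := by omega
  have : Nonempty (Fin n) := ⟨⟨0, hn1⟩⟩
  have hSdef : specRad (gsq U) =
      sSup {μ : ℝ | ∃ x : Fin n → ℝ, x ≠ 0 ∧ adjM (gsq U) *ᵥ x = μ • x} := rfl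
  have hone : (0:ℝ) ≤ (n:ℝ) - 1 := by
    have : (1:ℝ) ≤ (n:ℝ) := by exact_mod_cast hn1
    linarith
  have hle : specRad (gsq U) ≤ (n : ℝ) - 1 := by
    rw [hSdef]
    exact Real.sSup_le (fun μ ⟨x, hx, hAx⟩ => eig_le hn1 (gsq U) hx hAx) hone
  refine ⟨hle, ?_, ?_⟩
  · -- equality → diam ≤ 2
    intro heq
    by_contra hd
    obtain ⟨u, v, huv⟩ := SimpleGraph.exists_dist_eq_diam (G := U)
    have hd3 : 3 ≤ U.dist u v := by omega
    have hne : u ≠ v := by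
      intro h; rw [h, SimpleGraph.dist_self] at hd3; omega
    have hvu : U.dist v u = U.dist u v := SimpleGraph.dist_comm
    have hnadj : ¬ (gsq U).Adj u v := by
      intro hadj
      rw [gsq, SimpleGraph.fromRel_adj] at hadj
      rcases hadj with ⟨-, (h|h)|(h|h)⟩ <;> omega
    have hS : {μ : ℝ | ∃ x : Fin n → ℝ, x ≠ 0 ∧ adjM (gsq U) *ᵥ x = μ • x}.Nonempty := by
      by_contra hemp
      rw [Set.not_nonempty_iff_eq_empty] at hemp
      rw [hSdef, hemp, Real.sSup_empty] at heq
      have : (3:ℝ) ≤ (n:ℝ) := by exact_mod_cast hn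
      linarith
    have hmem := Set.Nonempty.csSup_mem hS (S_finite (gsq U))
    rw [← hSdef, heq] at hmem
    obtain ⟨x, hx, hAx⟩ := hmem
    exact hnadj (complete_of_eig hn (gsq U) hx hAx u v hne)
  · -- diam ≤ 2 → equality
    intro hd
    have hediam : U.ediam ≠ ⊤ := by
      obtain ⟨a, b, hab⟩ := SimpleGraph.exists_edist_eq_ediam_of_finite (G := U)
      rw [← hab]
      exact SimpleGraph.edist_ne_top_iff_reachable.mpr (hU.1.preconnected a b)
    have hcomp : ∀ a b : Fin n, a ≠ b → (gsq U).Adj a b := by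
      intro a b hab
      have h1 : 0 < U.dist a b := hU.1.pos_dist_of_ne hab
      have h2 : U.dist a b ≤ 2 := le_trans (SimpleGraph.dist_le_diam hediam) hd
      rw [gsq, SimpleGraph.fromRel_adj]
      exact ⟨hab, Or.inl (by omega)⟩
    have hAone : adjM (gsq U) *ᵥ (fun _ => (1:ℝ)) = ((n:ℝ) - 1) • (fun _ => (1:ℝ)) := by
      funext i
      rw [adjM_mulVec_apply]
      have hterm : ∀ j : Fin n, (if (gsq U).Adj i j then (1:ℝ) else 0) * 1
          = if j ∈ Finset.univ.erase i then (1:ℝ) else 0 := by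
        intro j
        by_cases h : j = i
        · simp [h]
        · simp [h, hcomp i j (Ne.symm h)]
      rw [Finset.sum_congr rfl (fun j _ => hterm j), Finset.sum_ite_mem,
        Finset.univ_inter, Finset.sum_const, nsmul_eq_mul,
        Finset.card_erase_of_mem (Finset.mem_univ i), Finset.card_univ, Fintype.card_fin,
        Nat.cast_sub hn1, Nat.cast_one]
      simp
    have hone_ne : (fun _ : Fin n => (1:ℝ)) ≠ 0 := by
      intro h
      have := congrFun h ⟨0, hn1⟩
      simp at this
    have hmem : ((n:ℝ) - 1) ∈
        {μ : ℝ | ∃ x : Fin n → ℝ, x ≠ 0 ∧ adjM (gsq U) *ᵥ x = μ • x} :=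
      ⟨_, hone_ne, hAone⟩
    have hge : (n : ℝ) - 1 ≤ specRad (gsq U) := by
      rw [hSdef]
      exact le_csSup (bddAbove_S hn1 (gsq U)) hmem
    linarith
end

section
/- If U is a unicyclic graph on n ≥ 6 vertices whose girth g satisfies 5 ≤ g ≤ n−1 (so U is not a cycle), then ρ(U²) > 4. -/
open SimpleGraph Finset Matrix
open scoped Classical

section Helpers

lemma spec_skeleton {n : ℕ} (hn : 0 < n) (A : Matrix (Fin n) (Fin n) ℝ)
    (hA : A.IsHermitian) (hb : ∀ i j, |A i j| ≤ 1) (x₀ : Fin n → ℝ) (hx0 : x₀ ≠ 0)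
    (c : ℝ) (hc : c * (∑ i, x₀ i * x₀ i) < ∑ i, (A *ᵥ x₀) i * x₀ i) :
    c < sSup {μ : ℝ | ∃ x : Fin n → ℝ, x ≠ 0 ∧ A *ᵥ x = μ • x} := by
  classical
  set E := EuclideanSpace ℝ (Fin n) with hE
  set e := (WithLp.equiv 2 (Fin n → ℝ)).symm with he
  haveI : Nontrivial E := by
    refine ⟨e x₀, 0, fun h => hx0 ?_⟩
    have := congrArg (WithLp.equiv 2 (Fin n → ℝ)) h
    simpa [he] using this
  set T : E →ₗ[ℝ] E := Matrix.toEuclideanLin A with hT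
  have hsymm : T.IsSymmetric := Matrix.isHermitian_iff_isSymmetric.mp hA
  have hTapp : ∀ x : Fin n → ℝ, T (e x) = e (A *ᵥ x) := fun x => rfl
  have hinner : ∀ x y : Fin n → ℝ, (inner ℝ (e x) (e y) : ℝ) = ∑ i, x i * y i := by
    intro x y
    rw [PiLp.inner_apply]
    simp [he, mul_comm]
  have hnorm : ∀ x : Fin n → ℝ, ‖e x‖ ^ 2 = ∑ i, x i * x i := by
    intro x
    rw [← real_inner_self_eq_norm_sq, hinner]
  -- the Rayleigh sup
  set μ : ℝ := ⨆ x : { x : E // x ≠ 0 }, RCLike.re (inner ℝ (T x) (x : E) : ℝ) / ‖(x : E)‖ ^ 2 with hμ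
  have heig : Module.End.HasEigenvalue T μ := by
    rw [hμ]
    simpa using hsymm.hasEigenvalue_iSup_of_finiteDimensional
  obtain ⟨v, hv⟩ := heig.exists_hasEigenvector
  have hv1 : A *ᵥ (WithLp.equiv 2 (Fin n → ℝ) v) = μ • WithLp.equiv 2 (Fin n → ℝ) v := by
    have := hv.apply_eq_smul
    have := congrArg (WithLp.equiv 2 (Fin n → ℝ)) this
    exact this
  have hv0 : (WithLp.equiv 2 (Fin n → ℝ)) v ≠ 0 := by
    intro h
    exact hv.right (by simpa using congrArg e h)
  -- μ is in the set
  have hmem : μ ∈ {μ : ℝ | ∃ x : Fin n → ℝ, x ≠ 0 ∧ A *ᵥ x = μ • x} := ⟨_, hv0, hv1⟩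
  -- boundedness of the set
  have hbdd : BddAbove {μ : ℝ | ∃ x : Fin n → ℝ, x ≠ 0 ∧ A *ᵥ x = μ • x} := by
    refine ⟨n, fun ν hν => ?_⟩
    obtain ⟨x, hx0', hx⟩ := hν
    obtain ⟨i₀, _, hi₀⟩ := Finset.exists_max_image Finset.univ (fun i => |x i|) ⟨⟨0, hn⟩, Finset.mem_univ _⟩
    have hpos : 0 < |x i₀| := by
      rcases Function.ne_iff.mp hx0' with ⟨j, hj⟩
      exact lt_of_lt_of_le (abs_pos.mpr hj) (hi₀ j (Finset.mem_univ j))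
    have h1 : |ν| * |x i₀| ≤ n * |x i₀| := by
      have h2 : ν * x i₀ = ∑ j, A i₀ j * x j := by
        have := congrFun hx i₀
        simp [Matrix.mulVec, dotProduct] at this
        rw [← this]
      calc |ν| * |x i₀| = |∑ j, A i₀ j * x j| := by rw [← abs_mul, h2]
        _ ≤ ∑ j, |A i₀ j * x j| := Finset.abs_sum_le_sum_abs _ _
        _ ≤ ∑ _j : Fin n, |x i₀| := by
            refine Finset.sum_le_sum fun j _ => ?_
            rw [abs_mul]
            exact (mul_le_mul (hb i₀ j) (hi₀ j (Finset.mem_univ j)) (abs_nonneg _)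
              zero_le_one).trans_eq (one_mul _)
        _ = n * |x i₀| := by simp [mul_comm]
    have := le_of_mul_le_mul_right h1 hpos
    exact le_trans (le_abs_self ν) this
  -- c < μ via Rayleigh quotient at x₀
  have hray : c < μ := by
    have hxnorm : (0:ℝ) < ∑ i, x₀ i * x₀ i := by
      have : (0:ℝ) < ‖e x₀‖ ^ 2 := by
        have h' : e x₀ ≠ 0 := fun h => hx0 (by simpa [he] using congrArg (WithLp.equiv 2 (Fin n → ℝ)) h)
        exact pow_pos (norm_pos_iff.mpr h') 2
      rwa [hnorm] at this
    have hcval : c < RCLike.re (inner ℝ (T (e x₀)) (e x₀) : ℝ) / ‖e x₀‖ ^ 2 := by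
      rw [hTapp, hinner]
      simp only [RCLike.re_to_real]
      rw [lt_div_iff₀ (by rw [hnorm]; exact hxnorm), hnorm]
      exact hc
    refine lt_of_lt_of_le hcval ?_
    have hbddray : BddAbove (Set.range fun x : { x : E // x ≠ 0 } =>
        RCLike.re (inner ℝ (T x) (x : E) : ℝ) / ‖(x : E)‖ ^ 2) := by
      refine ⟨‖LinearMap.toContinuousLinearMap T‖, ?_⟩
      rintro r ⟨⟨x, hx⟩, rfl⟩
      simp only [RCLike.re_to_real]
      rw [div_le_iff₀ (pow_pos (norm_pos_iff.mpr hx) 2)]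
      calc (inner ℝ (T x) x : ℝ) ≤ ‖T x‖ * ‖x‖ := real_inner_le_norm _ _
        _ ≤ ‖LinearMap.toContinuousLinearMap T‖ * ‖x‖ * ‖x‖ := by
            have h1 := (LinearMap.toContinuousLinearMap T).le_opNorm x
            rw [LinearMap.coe_toContinuousLinearMap'] at h1
            have hx' : (0:ℝ) ≤ ‖x‖ := norm_nonneg _
            nlinarith [h1, norm_nonneg (T x)]
        _ = ‖LinearMap.toContinuousLinearMap T‖ * ‖x‖ ^ 2 := by ring
    have hx0e : e x₀ ≠ 0 := fun h => hx0 (by simpa [he] using congrArg (WithLp.equiv 2 (Fin n → ℝ)) h)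
    exact le_ciSup hbddray ⟨e x₀, hx0e⟩
  exact lt_of_lt_of_le hray (le_csSup hbdd hmem)

-- first-exit lemma
lemma exit_lemma {V : Type*} {U : SimpleGraph V} (C : Finset V) :
    ∀ {w v : V}, U.Walk w v → w ∉ C → v ∈ C → ∃ a b, a ∉ C ∧ b ∈ C ∧ U.Adj a b := by
  intro w v p
  induction p with
  | nil => intro h1 h2; exact absurd h2 h1
  | @cons a x v h q ih =>
    intro h1 h2
    by_cases hx : x ∈ C
    · exact ⟨a, x, h1, hx, h⟩
    · exact ih hx h2

-- no triangles when girth ≥ 5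
lemma no_triangle {V : Type*} {U : SimpleGraph V} (h5 : 5 ≤ U.girth)
    {a b c : V} (hac : a ≠ c) (hab : U.Adj a b) (hbc : U.Adj b c) (hca : U.Adj a c) : False := by
  have hnA : ¬ U.IsAcyclic := by
    intro h
    rw [← SimpleGraph.girth_eq_zero] at h
    omega
  have how : (5 : ℕ∞) ≤ U.egirth := by
    have h1 : U.egirth ≠ ⊤ := SimpleGraph.egirth_eq_top.not.mpr hnA
    have := ENat.coe_toNat h1
    rw [← this]
    exact_mod_cast h5
  set w : U.Walk a a := SimpleGraph.Walk.cons hab (SimpleGraph.Walk.cons hbc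
    (SimpleGraph.Walk.cons hca.symm SimpleGraph.Walk.nil)) with hw
  have hcyc : w.IsCycle := by
    rw [SimpleGraph.Walk.isCycle_def, SimpleGraph.Walk.isTrail_def]
    refine ⟨?_, by simp [hw], ?_⟩
    · simp only [hw, SimpleGraph.Walk.edges_cons, SimpleGraph.Walk.edges_nil]
      have h1 : a ≠ b := hab.ne
      have h2 : b ≠ c := hbc.ne
      simp [List.nodup_cons, Sym2.eq_iff]
      tauto
    · simp only [hw, SimpleGraph.Walk.support_cons, SimpleGraph.Walk.support_nil, List.tail]
      have h1 : a ≠ b := hab.ne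
      have h2 : b ≠ c := hbc.ne
      simp [List.nodup_cons]
      tauto
  have hle := SimpleGraph.le_egirth.mp how a w hcyc
  have hlen : w.length = 3 := by simp [hw]
  rw [hlen] at hle
  norm_num at hle

end Helpers

/-- A unicyclic graph on `n ≥ 6` vertices with girth `g`,
`5 ≤ g ≤ n - 1`, has `ρ(U²) > 4`. -/
theorem specRad_sq_unicyclic_girth_gt_four {n : ℕ} (hn : 6 ≤ n)
    (U : SimpleGraph (Fin n)) (hU : IsUnicyclic U)
    (hg5 : 5 ≤ U.girth) (hgn : U.girth ≤ n - 1) :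
    4 < specRad (gsq U) := by
  classical
  set g := U.girth with hgdef
  have hnA : ¬ U.IsAcyclic := by
    intro h; rw [← SimpleGraph.girth_eq_zero] at h; omega
  obtain ⟨v, c, hc, hglen⟩ := SimpleGraph.exists_girth_eq_length.mpr hnA
  set l := c.support.tail with hl
  have hlen : l.length = g := by
    rw [hl, List.length_tail, SimpleGraph.Walk.length_support]; omega
  haveI : NeZero g := ⟨by omega⟩
  haveI : Fact (1 < g) := ⟨by omega⟩
  set f : ZMod g → Fin n := fun i => l.get ⟨i.val, by rw [hlen]; exact ZMod.val_lt i⟩ with hf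
  have finj : Function.Injective f := by
    intro i j hij
    have h1 := List.nodup_iff_injective_get.mp hc.support_nodup hij
    exact ZMod.val_injective g (by simpa using congrArg Fin.val h1)
  -- adjacency around the cycle
  have hchain : List.Chain U.Adj v l := by
    have h1 := c.isChain_adj_support
    rwa [c.support_eq_cons] at h1
  have h0ne : l ≠ [] := by intro h; rw [h] at hlen; simp at hlen; omega
  have hfeq : ∀ (i : ZMod g) (k : ℕ) (hk : k < l.length), i.val = k → f i = l.get ⟨k, hk⟩ := by
    intro i k hk h
    simp only [hf]
    congr 1
    exact Fin.ext h
  have hlast : ∀ (hk : g - 1 < l.length), l.get ⟨g-1, hk⟩ = v := by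
    intro hk
    have h2 : (⟨g-1, hk⟩ : Fin l.length) = ⟨l.length - 1, by omega⟩ := Fin.ext (show g - 1 = l.length - 1 by omega)
    rw [h2, List.get_length_sub_one, List.getLast_tail]
    exact c.getLast_support
  have hadjf : ∀ i : ZMod g, U.Adj (f i) (f (i + 1)) := by
    intro i
    have hiv : i.val < g := ZMod.val_lt i
    have hval : (i + 1).val = (i.val + 1) % g := by
      rw [ZMod.val_add, ZMod.val_one]
    obtain ⟨h0, hsucc⟩ : (∀ h : 0 < l.length, U.Adj v (l.get ⟨0, h⟩)) ∧
        ∀ (k : ℕ) (h : k < l.length - 1), U.Adj (l.get ⟨k, by omega⟩) (l.get ⟨k + 1, by omega⟩) := by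
      have := List.isChain_iff_getElem.mp hchain
      exact ⟨fun h => by simpa using this 0 (by simp; omega),
        fun k h => this (k + 1) (by simp; omega)⟩
    by_cases hcase : i.val + 1 < g
    · have hv1 : (i + 1).val = i.val + 1 := by rw [hval, Nat.mod_eq_of_lt hcase]
      rw [hfeq i i.val (by omega) rfl, hfeq (i+1) (i.val+1) (by omega) hv1]
      exact hsucc i.val (by omega)
    · have hv1 : (i + 1).val = 0 := by
        rw [hval, show i.val + 1 = g by omega, Nat.mod_self]
      rw [hfeq i (g-1) (by omega) (by omega), hfeq (i+1) 0 (by omega) hv1, hlast]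
      exact h0 (by omega)
  -- distance facts
  have hconn := hU.1
  have htri : ∀ a b c' : Fin n, a ≠ c' → U.Adj a b → U.Adj b c' → ¬ U.Adj a c' :=
    fun a b c' hac hab hbc hca => no_triangle hg5 hac hab hbc hca
  have hd2 : ∀ a b c' : Fin n, a ≠ c' → U.Adj a b → U.Adj b c' → U.dist a c' = 2 := by
    intro a b c' hac hab hbc
    have hle : U.dist a c' ≤ 2 := by
      have := SimpleGraph.dist_le (SimpleGraph.Walk.cons hab
        (SimpleGraph.Walk.cons hbc SimpleGraph.Walk.nil))
      simpa using this
    have hne0 : U.dist a c' ≠ 0 := fun h => hac (hconn.dist_eq_zero_iff.mp h)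
    have hne1 : U.dist a c' ≠ 1 := fun h =>
      htri a b c' hac hab hbc (SimpleGraph.dist_eq_one_iff_adj.mp h)
    omega
  have hgadj1 : ∀ a b : Fin n, U.Adj a b → (gsq U).Adj a b := by
    intro a b h
    exact (SimpleGraph.fromRel_adj _ a b).mpr
      ⟨h.ne, Or.inl (Or.inl (SimpleGraph.dist_eq_one_iff_adj.mpr h))⟩
  have hgadj2 : ∀ a b c' : Fin n, a ≠ c' → U.Adj a b → U.Adj b c' → (gsq U).Adj a c' := by
    intro a b c' hac hab hbc
    exact (SimpleGraph.fromRel_adj _ a c').mpr ⟨hac, Or.inl (Or.inr (hd2 a b c' hac hab hbc))⟩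
  -- nonzero small constants in ZMod g
  have hconst : ∀ k : ℕ, 0 < k → k < g → ((k : ZMod g) ≠ 0) := by
    intro k hk1 hk2 h
    have := (ZMod.natCast_eq_zero_iff k g).mp h
    exact absurd (Nat.le_of_dvd hk1 this) (by omega)
  have hfne : ∀ (i : ZMod g) (a b : ZMod g), a ≠ b → f (i + a) ≠ f (i + b) := by
    intro i a b hab h
    exact hab (by have := finj h; exact add_left_cancel this)
  -- the cycle vertex set
  set C : Finset (Fin n) := Finset.image f Finset.univ with hC
  have hCcard : C.card = g := by
    rw [hC, Finset.card_image_of_injective _ finj, Finset.card_univ, ZMod.card]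
  -- a vertex outside C
  have hex : ∃ w : Fin n, w ∉ C := by
    by_contra h
    push_neg at h
    have : C = Finset.univ := Finset.eq_univ_iff_forall.mpr h
    rw [this, Finset.card_univ, Fintype.card_fin] at hCcard
    omega
  obtain ⟨w, hw⟩ := hex
  have hvC : v ∈ C := by
    rw [hC, Finset.mem_image]
    refine ⟨(g-1 : ℕ), Finset.mem_univ _, ?_⟩
    rw [hfeq _ (g-1) (by omega) (by rw [ZMod.val_cast_of_lt]; omega), hlast]
  obtain ⟨p⟩ := hconn.preconnected w v
  obtain ⟨u, b, huC, hbC, hub⟩ := exit_lemma C p hw hvC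
  obtain ⟨i₀, _, hi₀⟩ := Finset.mem_image.mp hbC
  -- basic ZMod facts
  have hfne' : ∀ (i a : ZMod g), a ≠ 0 → f i ≠ f (i + a) := by
    intro i a ha h
    exact ha (left_eq_add.mp (finj h))
  have hzne : ∀ a b : ℕ, a < g → b < g → a ≠ b → ((a : ZMod g) ≠ (b : ZMod g)) := by
    intro a b ha hb hab h
    have := congrArg ZMod.val h
    rw [ZMod.val_cast_of_lt ha, ZMod.val_cast_of_lt hb] at this
    exact hab this
  -- gsq adjacencies around the cycle
  have hA1 : ∀ i : ZMod g, (gsq U).Adj (f i) (f (i + 1)) := fun i => hgadj1 _ _ (hadjf i)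
  have hA2 : ∀ i : ZMod g, (gsq U).Adj (f i) (f (i + 2)) := by
    intro i
    have h2 : U.Adj (f (i+1)) (f (i + 2)) := by
      have := hadjf (i+1)
      rwa [show i + 1 + 1 = i + 2 by ring] at this
    exact hgadj2 _ (f (i+1)) _ (hfne' i 2 (by
      have := hzne 2 0 (by omega) (by omega) (by omega)
      simpa using this)) (hadjf i) h2
  have hA1' : ∀ i : ZMod g, (gsq U).Adj (f i) (f (i - 1)) := by
    intro i
    have := (hA1 (i - 1)).symm
    rwa [show i - 1 + 1 = i by ring] at this
  have hA2' : ∀ i : ZMod g, (gsq U).Adj (f i) (f (i - 2)) := by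
    intro i
    have := (hA2 (i - 2)).symm
    rwa [show i - 2 + 2 = i by ring] at this
  -- u's adjacencies
  have hfC : ∀ a : ZMod g, f a ∈ C := fun a => Finset.mem_image_of_mem f (Finset.mem_univ a)
  have hune : ∀ a : ZMod g, u ≠ f a := fun a h => huC (h ▸ hfC a)
  have hub0 : U.Adj u (f i₀) := hi₀ ▸ hub
  have hAu0 : (gsq U).Adj u (f i₀) := hgadj1 _ _ hub0
  have hAup : (gsq U).Adj u (f (i₀ + 1)) :=
    hgadj2 u (f i₀) _ (hune _) hub0 (hadjf i₀)
  have hAum : (gsq U).Adj u (f (i₀ - 1)) := by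
    refine hgadj2 u (f i₀) _ (hune _) hub0 ?_
    have := (hadjf (i₀ - 1)).symm
    rwa [show i₀ - 1 + 1 = i₀ by ring] at this
  -- the matrix and test vector
  set S₀ : Finset (Fin n) := insert u C with hS₀
  have hCS : C ⊆ S₀ := Finset.subset_insert _ _
  have huS : u ∈ S₀ := Finset.mem_insert_self _ _
  have hS₀card : S₀.card = g + 1 := by rw [hS₀, Finset.card_insert_of_notMem huC, hCcard]
  set A : Matrix (Fin n) (Fin n) ℝ :=
    Matrix.of (fun i j => if (gsq U).Adj i j then (1 : ℝ) else 0) with hAdef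
  have hAnn : ∀ i j, 0 ≤ A i j := by
    intro i j; simp only [hAdef, Matrix.of_apply]; split_ifs <;> norm_num
  have row_ge : ∀ (i : Fin n) (N : Finset (Fin n)), N ⊆ S₀ → (∀ j ∈ N, (gsq U).Adj i j) →
      (N.card : ℝ) ≤ ∑ j ∈ S₀, A i j := by
    intro i N hsub hadj
    have h1 : ∑ j ∈ N, A i j = N.card := by
      rw [Finset.sum_congr rfl (fun j hj => show A i j = 1 by
        simp only [hAdef, Matrix.of_apply, if_pos (hadj j hj)])]
      simp
    rw [← h1]
    exact Finset.sum_le_sum_of_subset_of_nonneg hsub (fun j _ _ => hAnn i j)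
  -- distinctness of offsets
  have e1 : (1 : ZMod g) = ((1:ℕ) : ZMod g) := by push_cast; ring
  have e2 : (2 : ZMod g) = ((2:ℕ) : ZMod g) := by push_cast; ring
  have hg0 : ((g:ℕ) : ZMod g) = 0 := by
    rw [ZMod.natCast_eq_zero_iff]
  have em1 : (-1 : ZMod g) = ((g-1:ℕ) : ZMod g) := by
    push_cast [Nat.cast_sub (by omega : 1 ≤ g)]
    linear_combination -hg0
  have em2 : (-2 : ZMod g) = ((g-2:ℕ) : ZMod g) := by
    push_cast [Nat.cast_sub (by omega : 2 ≤ g)]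
    linear_combination -hg0
  have z12 : (1 : ZMod g) ≠ 2 := by
    rw [e1, e2]; exact hzne 1 2 (by omega) (by omega) (by omega)
  have z1m1 : (1 : ZMod g) ≠ -1 := by
    rw [em1, e1]; exact hzne 1 (g-1) (by omega) (by omega) (by omega)
  have z1m2 : (1 : ZMod g) ≠ -2 := by
    rw [em2, e1]; exact hzne 1 (g-2) (by omega) (by omega) (by omega)
  have z2m1 : (2 : ZMod g) ≠ -1 := by
    rw [em1, e2]; exact hzne 2 (g-1) (by omega) (by omega) (by omega)
  have z2m2 : (2 : ZMod g) ≠ -2 := by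
    rw [em2, e2]; exact hzne 2 (g-2) (by omega) (by omega) (by omega)
  have zm1m2 : (-1 : ZMod g) ≠ -2 := by
    rw [em2, em1]; exact hzne (g-1) (g-2) (by omega) (by omega) (by omega)
  have z10 : (1 : ZMod g) ≠ 0 := by
    rw [e1, show (0 : ZMod g) = ((0:ℕ) : ZMod g) by push_cast; ring]
    exact hzne 1 0 (by omega) (by omega) (by omega)
  have z20 : (2 : ZMod g) ≠ 0 := by
    rw [e2, show (0 : ZMod g) = ((0:ℕ) : ZMod g) by push_cast; ring]
    exact hzne 2 0 (by omega) (by omega) (by omega)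
  have hsubm1 : ∀ i : ZMod g, i - 1 = i + (-1) := fun i => by ring
  have hsubm2 : ∀ i : ZMod g, i - 2 = i + (-2) := fun i => by ring
  have h4card : ∀ i : ZMod g, ({f (i+1), f (i+2), f (i-1), f (i-2)} : Finset (Fin n)).card = 4 := by
    intro i
    have d12 : f (i+1) ≠ f (i+2) := hfne i 1 2 z12
    have d1m1 : f (i+1) ≠ f (i-1) := by rw [hsubm1]; exact hfne i 1 (-1) z1m1
    have d1m2 : f (i+1) ≠ f (i-2) := by rw [hsubm2]; exact hfne i 1 (-2) z1m2
    have d2m1 : f (i+2) ≠ f (i-1) := by rw [hsubm1]; exact hfne i 2 (-1) z2m1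
    have d2m2 : f (i+2) ≠ f (i-2) := by rw [hsubm2]; exact hfne i 2 (-2) z2m2
    have dm1m2 : f (i-1) ≠ f (i-2) := by rw [hsubm1, hsubm2]; exact hfne i (-1) (-2) zm1m2
    have m1 : f (i+1) ∉ ({f (i+2), f (i-1), f (i-2)} : Finset (Fin n)) := by
      simp only [Finset.mem_insert, Finset.mem_singleton]
      push_neg
      exact ⟨d12, d1m1, d1m2⟩
    have m2 : f (i+2) ∉ ({f (i-1), f (i-2)} : Finset (Fin n)) := by
      simp only [Finset.mem_insert, Finset.mem_singleton]
      push_neg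
      exact ⟨d2m1, d2m2⟩
    have m3 : f (i-1) ∉ ({f (i-2)} : Finset (Fin n)) := by
      simp only [Finset.mem_singleton]
      exact dm1m2
    rw [Finset.card_insert_of_notMem m1, Finset.card_insert_of_notMem m2,
      Finset.card_insert_of_notMem m3, Finset.card_singleton]
  -- row bounds
  have hrow4 : ∀ i : ZMod g, (4:ℝ) ≤ ∑ j ∈ S₀, A (f i) j := by
    intro i
    have := row_ge (f i) {f (i+1), f (i+2), f (i-1), f (i-2)}
      (by intro j hj
          simp only [Finset.mem_insert, Finset.mem_singleton] at hj
          rcases hj with h|h|h|h <;> (subst h; exact hCS (hfC _)))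
      (by intro j hj
          simp only [Finset.mem_insert, Finset.mem_singleton] at hj
          rcases hj with h|h|h|h <;> subst h
          exacts [hA1 i, hA2 i, hA1' i, hA2' i])
    rwa [h4card i] at this
  have hrow5 : ∀ i : ZMod g, (gsq U).Adj (f i) u → (5:ℝ) ≤ ∑ j ∈ S₀, A (f i) j := by
    intro i hadju
    have hnotmem : u ∉ ({f (i+1), f (i+2), f (i-1), f (i-2)} : Finset (Fin n)) := by
      simp only [Finset.mem_insert, Finset.mem_singleton]
      push_neg
      exact ⟨hune _, hune _, hune _, hune _⟩
    have := row_ge (f i) (insert u {f (i+1), f (i+2), f (i-1), f (i-2)})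
      (by intro j hj
          rcases Finset.mem_insert.mp hj with h|h
          · subst h; exact huS
          · simp only [Finset.mem_insert, Finset.mem_singleton] at h
            rcases h with h|h|h|h <;> (subst h; exact hCS (hfC _)))
      (by intro j hj
          rcases Finset.mem_insert.mp hj with h|h
          · subst h; exact hadju
          · simp only [Finset.mem_insert, Finset.mem_singleton] at h
            rcases h with h|h|h|h <;> subst h
            exacts [hA1 i, hA2 i, hA1' i, hA2' i])
    rwa [Finset.card_insert_of_notMem hnotmem, h4card i] at this
  have hrowu : (3:ℝ) ≤ ∑ j ∈ S₀, A u j := by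
    have d01 : f i₀ ≠ f (i₀ + 1) := hfne' i₀ 1 z10
    have d0m1 : f i₀ ≠ f (i₀ - 1) := by
      rw [hsubm1]; exact hfne' i₀ (-1) (fun h => z10 (by linear_combination -h))
    have dp1m1 : f (i₀ + 1) ≠ f (i₀ - 1) := by
      rw [hsubm1]
      exact hfne i₀ 1 (-1) z1m1
    have m1 : f i₀ ∉ ({f (i₀+1), f (i₀-1)} : Finset (Fin n)) := by
      simp only [Finset.mem_insert, Finset.mem_singleton]
      push_neg
      exact ⟨d01, d0m1⟩
    have m2 : f (i₀+1) ∉ ({f (i₀-1)} : Finset (Fin n)) := by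
      simp only [Finset.mem_singleton]
      exact dp1m1
    have hcard3 : ({f i₀, f (i₀+1), f (i₀-1)} : Finset (Fin n)).card = 3 := by
      rw [Finset.card_insert_of_notMem m1, Finset.card_insert_of_notMem m2,
        Finset.card_singleton]
    have := row_ge u {f i₀, f (i₀+1), f (i₀-1)}
      (by intro j hj
          simp only [Finset.mem_insert, Finset.mem_singleton] at hj
          rcases hj with h|h|h <;> (subst h; exact hCS (hfC _)))
      (by intro j hj
          simp only [Finset.mem_insert, Finset.mem_singleton] at hj
          rcases hj with h|h|h <;> subst h
          exacts [hAu0, hAup, hAum])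
    rwa [hcard3] at this
  -- total sum over C
  have hCsum : (4 * g + 2 : ℝ) ≤ ∑ i ∈ C, ∑ j ∈ S₀, A i j := by
    rw [hC, Finset.sum_image (fun a _ b _ h => finj h)]
    set r : ZMod g → ℝ := fun i => ∑ j ∈ S₀, A (f i) j with hr
    have hne01 : i₀ ≠ i₀ + 1 := fun h => z10 (by linear_combination -h)
    have hsump : ∑ i ∈ ({i₀, i₀ + 1} : Finset (ZMod g)), (r i - 4) = (r i₀ - 4) + (r (i₀+1) - 4) :=
      Finset.sum_pair hne01
    have h5a : (5:ℝ) ≤ r i₀ := hrow5 i₀ hAu0.symm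
    have h5b : (5:ℝ) ≤ r (i₀ + 1) := hrow5 (i₀+1) hAup.symm
    have hsub : ∑ i ∈ ({i₀, i₀ + 1} : Finset (ZMod g)), (r i - 4) ≤ ∑ i : ZMod g, (r i - 4) :=
      Finset.sum_le_sum_of_subset_of_nonneg (Finset.subset_univ _)
        (fun i _ _ => by have := hrow4 i; simp only [hr]; linarith)
    have hsplit : ∑ i : ZMod g, (r i - 4) = (∑ i : ZMod g, r i) - 4 * g := by
      rw [Finset.sum_sub_distrib, Finset.sum_const, Finset.card_univ, ZMod.card]
      simp [mul_comm]
    have : (2:ℝ) ≤ (∑ i : ZMod g, r i) - 4 * g := by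
      rw [← hsplit]
      refine le_trans ?_ hsub
      rw [hsump]
      linarith
    simp only [hr] at this
    linarith
  -- test vector
  set x₀ : Fin n → ℝ := fun j => if j ∈ S₀ then 1 else 0 with hx₀def
  have hx0 : x₀ ≠ 0 := by
    intro h
    have := congrFun h u
    simp [hx₀def, huS] at this
  have hsq : ∑ i, x₀ i * x₀ i = (g : ℝ) + 1 := by
    have h1 : ∀ i, x₀ i * x₀ i = if i ∈ S₀ then (1:ℝ) else 0 := by
      intro i
      by_cases h : i ∈ S₀ <;> simp [hx₀def, h]
    rw [Finset.sum_congr rfl (fun i _ => h1 i), Finset.sum_ite_mem, Finset.univ_inter,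
      Finset.sum_const, hS₀card]
    push_cast
    ring
  have hmv : ∀ i, (A *ᵥ x₀) i = ∑ j ∈ S₀, A i j := by
    intro i
    simp only [Matrix.mulVec, dotProduct, hx₀def, mul_ite, mul_one, mul_zero]
    rw [Finset.sum_ite_mem, Finset.univ_inter]
  have hquad : ∑ i, (A *ᵥ x₀) i * x₀ i = ∑ i ∈ S₀, ∑ j ∈ S₀, A i j := by
    have h1 : ∀ i, (A *ᵥ x₀) i * x₀ i = if i ∈ S₀ then (∑ j ∈ S₀, A i j) else 0 := by
      intro i
      rw [hmv]
      by_cases h : i ∈ S₀ <;> simp [hx₀def, h]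
    rw [Finset.sum_congr rfl (fun i _ => h1 i), Finset.sum_ite_mem, Finset.univ_inter]
  have htotal : (4 * g + 5 : ℝ) ≤ ∑ i ∈ S₀, ∑ j ∈ S₀, A i j := by
    rw [hS₀, Finset.sum_insert huC]
    have := hCsum
    linarith [hrowu]
  have hc : (4:ℝ) * (∑ i, x₀ i * x₀ i) < ∑ i, (A *ᵥ x₀) i * x₀ i := by
    rw [hsq, hquad]
    have : (4:ℝ) * ((g:ℝ) + 1) = 4 * g + 4 := by ring
    linarith
  have hAherm : A.IsHermitian := by
    ext i j
    simp only [Matrix.conjTranspose_apply, hAdef, Matrix.of_apply, star_trivial]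
    rw [SimpleGraph.adj_comm]
  have hb : ∀ i j, |A i j| ≤ 1 := by
    intro i j
    simp only [hAdef, Matrix.of_apply]
    split_ifs <;> norm_num
  have := spec_skeleton (by omega) A hAherm hb x₀ hx0 4 hc
  exact this
end

section
/- If U is a unicyclic graph on n ≥ 6 vertices whose girth g satisfies 5 ≤ g ≤ n−1, then the average degree of U² is greater than 4. -/
open SimpleGraph Finset Matrix
open scoped Classical

section Aux
variable {V : Type*}

lemma aux_cycle3 (G : SimpleGraph V) (a b c : V) (h1 : G.Adj a b) (h2 : G.Adj b c)
    (h3 : G.Adj c a) : ∃ (w : G.Walk a a), w.IsCycle ∧ w.length = 3 := by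
  refine ⟨.cons h1 (.cons h2 (.cons h3 .nil)), ?_, rfl⟩
  rw [SimpleGraph.Walk.isCycle_def]
  refine ⟨?_, by simp, ?_⟩
  · rw [SimpleGraph.Walk.isTrail_def]
    simp [Sym2.eq, Sym2.rel_iff', h1.ne, h2.ne, h3.ne, h1.ne', h2.ne', h3.ne']
  · simp [h2.ne, h3.ne', (h3.symm.ne : a ≠ c)]
    exact ⟨h1.ne', h3.ne⟩

lemma aux_cycle4 (G : SimpleGraph V) (a b c d : V) (h1 : G.Adj a b) (h2 : G.Adj b c)
    (h3 : G.Adj c d) (h4 : G.Adj d a) (hac : a ≠ c) (hbd : b ≠ d) :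
    ∃ (w : G.Walk a a), w.IsCycle ∧ w.length = 4 := by
  refine ⟨.cons h1 (.cons h2 (.cons h3 (.cons h4 .nil))), ?_, rfl⟩
  rw [SimpleGraph.Walk.isCycle_def]
  refine ⟨?_, by simp, ?_⟩
  · rw [SimpleGraph.Walk.isTrail_def]
    simp [Sym2.eq, Sym2.rel_iff', h1.ne, h2.ne, h3.ne, h4.ne, h1.ne', h2.ne', h3.ne', hac, hbd]
    aesop
  · simp [h2.ne, h3.ne, h4.ne', hac, hbd, h1.ne']
    exact ⟨fun h => hac h.symm, h4.ne⟩

lemma aux_exit {G : SimpleGraph V} (s : Finset V) :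
    ∀ {a x : V}, G.Walk a x → a ∈ s → x ∉ s →
      ∃ u w, G.Adj u w ∧ u ∈ s ∧ w ∉ s := by
  intro a x p
  induction p with
  | nil => intro h1 h2; exact absurd h1 h2
  | @cons a b x h q ih =>
    intro h1 h2
    by_cases hb : b ∈ s
    · exact ih hb h2
    · exact ⟨a, b, h, h1, hb⟩

lemma aux_two_nbrs {G : SimpleGraph V} {u : V} (p : G.Walk u u) (hp : p.IsCycle) :
    ∃ b1 b2, b1 ≠ b2 ∧ G.Adj u b1 ∧ G.Adj u b2 ∧ b1 ∈ p.support ∧ b2 ∈ p.support := by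
  cases p with
  | nil => exact absurd hp (SimpleGraph.Walk.IsCycle.not_of_nil)
  | @cons u b x h q =>
    have hq : ¬ q.Nil := by
      have h3 := hp.three_le_length
      simp only [SimpleGraph.Walk.length_cons] at h3
      rw [SimpleGraph.Walk.nil_iff_length_eq]
      omega
    have hq' : ¬ q.reverse.Nil := by
      rwa [SimpleGraph.Walk.nil_iff_length_eq, SimpleGraph.Walk.length_reverse,
        ← SimpleGraph.Walk.nil_iff_length_eq]
    obtain ⟨c, h2, q2, hq2⟩ := SimpleGraph.Walk.not_nil_iff.mp hq'
    refine ⟨b, c, ?_, h, h2, ?_, ?_⟩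
    · intro hbc
      have htrail := hp.isTrail
      rw [SimpleGraph.Walk.isTrail_def] at htrail
      simp only [SimpleGraph.Walk.edges_cons, List.nodup_cons] at htrail
      have hmem : s(u, c) ∈ q.reverse.edges := by rw [hq2]; simp
      rw [SimpleGraph.Walk.edges_reverse, List.mem_reverse] at hmem
      subst hbc
      exact htrail.1 hmem
    · simp only [SimpleGraph.Walk.support_cons, List.mem_cons]
      right; exact q.start_mem_support
    · simp only [SimpleGraph.Walk.support_cons, List.mem_cons]
      right
      have : c ∈ q.reverse.support := by rw [hq2]; simp
      rwa [SimpleGraph.Walk.support_reverse, List.mem_reverse] at this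

end Aux

section Aux2
variable {V : Type*} [Fintype V]

lemma aux_deg3 {G : SimpleGraph V} (hconn : G.Connected) {a : V} (c : G.Walk a a)
    (hc : c.IsCycle) (hlt : c.length < Fintype.card V) : ∃ u, 3 ≤ G.degree u := by
  classical
  set s : Finset V := c.support.toFinset with hs
  have hcard_s : s.card ≤ c.length := by
    cases c with
    | nil => exact absurd hc (SimpleGraph.Walk.IsCycle.not_of_nil)
    | @cons a b x h q =>
      have ha : a ∈ q.support := q.end_mem_support
      have : s = q.support.toFinset := by
        rw [hs]
        simp only [SimpleGraph.Walk.support_cons, List.toFinset_cons]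
        exact Finset.insert_eq_self.mpr (List.mem_toFinset.mpr ha)
      rw [this]
      calc q.support.toFinset.card ≤ q.support.length := q.support.toFinset_card_le
        _ = q.length + 1 := q.length_support
        _ = (SimpleGraph.Walk.cons h q).length := by simp
  have hx : ∃ x, x ∉ s := by
    by_contra hall
    push_neg at hall
    have : s = Finset.univ := Finset.eq_univ_iff_forall.mpr hall
    rw [this, Finset.card_univ] at hcard_s
    omega
  obtain ⟨x, hx⟩ := hx
  obtain ⟨p⟩ := hconn.preconnected a x
  have ha_s : a ∈ s := List.mem_toFinset.mpr c.start_mem_support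
  obtain ⟨u, w, huw, hus, hws⟩ := aux_exit s p ha_s hx
  have hu : u ∈ c.support := List.mem_toFinset.mp hus
  have hc' : (c.rotate u hu).IsCycle := hc.rotate hu
  obtain ⟨b1, b2, hb12, hub1, hub2, hb1s, hb2s⟩ := aux_two_nbrs (c.rotate u hu) hc'
  have hmem : ∀ y, y ∈ (c.rotate u hu).support → y ∈ s := by
    intro y hy
    rw [SimpleGraph.Walk.support_eq_cons, List.mem_cons] at hy
    rcases hy with rfl | hy
    · exact hus
    · have := (SimpleGraph.Walk.support_rotate c u hu).mem_iff.mp hy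
      rw [hs]
      apply List.mem_toFinset.mpr
      rw [SimpleGraph.Walk.support_eq_cons, List.mem_cons]
      exact Or.inr this
  refine ⟨u, ?_⟩
  have hsub : {b1, b2, w} ⊆ G.neighborFinset u := by
    intro y hy
    simp only [Finset.mem_insert, Finset.mem_singleton] at hy
    rcases hy with rfl | rfl | rfl
    · exact (G.mem_neighborFinset u _).mpr hub1
    · exact (G.mem_neighborFinset u _).mpr hub2
    · exact (G.mem_neighborFinset u _).mpr huw
  have hcard3 : ({b1, b2, w} : Finset V).card = 3 := by
    rw [Finset.card_insert_of_notMem, Finset.card_insert_of_notMem, Finset.card_singleton]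
    · simp only [Finset.mem_singleton]
      intro h; exact hws (h ▸ hmem b2 hb2s)
    · simp only [Finset.mem_insert, Finset.mem_singleton]
      rintro (h | h)
      · exact hb12 h
      · exact hws (h ▸ hmem b1 hb1s)
  calc 3 = ({b1, b2, w} : Finset V).card := hcard3.symm
    _ ≤ (G.neighborFinset u).card := Finset.card_le_card hsub
end Aux2

/-- A unicyclic graph on `n ≥ 6` vertices with girth `g`,
`5 ≤ g ≤ n - 1`, has average degree of its square greater than 4. -/
theorem avgDeg_sq_unicyclic_girth_gt_four {n : ℕ} (hn : 6 ≤ n)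
    (U : SimpleGraph (Fin n)) (hU : IsUnicyclic U)
    (hg5 : 5 ≤ U.girth) (hgn : U.girth ≤ n - 1) :
    4 < avgDeg (gsq U) := by
  classical
  obtain ⟨hconn, hcardE⟩ := hU
  -- girth facts
  have hacyc : ¬ U.IsAcyclic := by
    intro h
    have := SimpleGraph.girth_eq_zero.mpr h
    omega
  have hcycle_len : ∀ (a : Fin n) (w : U.Walk a a), w.IsCycle → 5 ≤ w.length := by
    intro a w hw
    have h1 : U.egirth ≤ w.length := SimpleGraph.le_egirth.mp le_rfl a w hw
    have h2 : U.girth ≤ w.length := by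
      have := ENat.toNat_le_toNat h1 (by simp)
      simpa [SimpleGraph.girth] using this
    omega
  have htrifree : ∀ a b c, U.Adj a b → U.Adj b c → U.Adj c a → False := by
    intro a b c h1 h2 h3
    obtain ⟨w, hw, hl⟩ := aux_cycle3 U a b c h1 h2 h3
    have := hcycle_len a w hw; omega
  have hc4free : ∀ a b c d, U.Adj a b → U.Adj b c → U.Adj c d → U.Adj d a →
      a ≠ c → b ≠ d → False := by
    intro a b c d h1 h2 h3 h4 hac hbd
    obtain ⟨w, hw, hl⟩ := aux_cycle4 U a b c d h1 h2 h3 h4 hac hbd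
    have := hcycle_len a w hw; omega
  -- adjacency in the square
  have hgsq1 : ∀ v u, U.Adj v u → (gsq U).Adj v u := by
    intro v u h
    rw [gsq, SimpleGraph.fromRel_adj]
    exact ⟨h.ne, Or.inl (Or.inl (SimpleGraph.dist_eq_one_iff_adj.mpr h))⟩
  have hgsq2 : ∀ v w u, U.Adj v w → U.Adj w u → u ≠ v → (gsq U).Adj v u := by
    intro v w u h1 h2 hne
    have hnadj : ¬ U.Adj v u := fun h => htrifree v w u h1 h2 h.symm
    have hd : U.dist v u = 2 := by
      have hle : U.dist v u ≤ 2 := by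
        have := SimpleGraph.dist_le (SimpleGraph.Walk.cons h1 (SimpleGraph.Walk.cons h2 SimpleGraph.Walk.nil))
        simpa using this
      have h0 : U.dist v u ≠ 0 := by
        intro h
        exact hne ((hconn.dist_eq_zero_iff).mp h).symm
      have h1' : U.dist v u ≠ 1 := fun h => hnadj (SimpleGraph.dist_eq_one_iff_adj.mp h)
      omega
    rw [gsq, SimpleGraph.fromRel_adj]
    exact ⟨hne.symm, Or.inl (Or.inr hd)⟩
  -- per-vertex lower bound
  have key : ∀ v, U.degree v + ∑ w ∈ U.neighborFinset v, (U.degree w - 1) ≤ deg (gsq U) v := by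
    intro v
    set Nv := U.neighborFinset v with hNv
    set Sv := Nv.biUnion (fun w => (U.neighborFinset w).erase v) with hSvdef
    have hdisj : Disjoint Nv Sv := by
      rw [Finset.disjoint_left]
      intro u hu hus
      rw [hSvdef, Finset.mem_biUnion] at hus
      obtain ⟨w, hw, hu2⟩ := hus
      rw [Finset.mem_erase] at hu2
      exact htrifree v w u ((U.mem_neighborFinset v _).mp hw)
        ((U.mem_neighborFinset w _).mp hu2.2) ((U.mem_neighborFinset v _).mp hu).symm
    have hSv : Sv.card = ∑ w ∈ Nv, (U.degree w - 1) := by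
      rw [hSvdef, Finset.card_biUnion]
      · refine Finset.sum_congr rfl (fun w hw => ?_)
        rw [Finset.card_erase_of_mem]
        · rfl
        · exact (U.mem_neighborFinset w _).mpr ((U.mem_neighborFinset v _).mp hw).symm
      · intro w1 h1 w2 h2 hne
        rw [Function.onFun, Finset.disjoint_left]
        intro u hu1 hu2
        rw [Finset.mem_erase] at hu1 hu2
        exact hc4free v w1 u w2 ((U.mem_neighborFinset v _).mp h1)
          ((U.mem_neighborFinset w1 _).mp hu1.2) ((U.mem_neighborFinset w2 _).mp hu2.2).symm
          ((U.mem_neighborFinset v _).mp h2).symm (fun h => hu1.1 h.symm) hne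
    have hsub : Nv ∪ Sv ⊆ Finset.univ.filter (fun u => (gsq U).Adj v u) := by
      intro u hu
      rw [Finset.mem_union] at hu
      rw [Finset.mem_filter]
      refine ⟨Finset.mem_univ u, ?_⟩
      rcases hu with hu | hu
      · exact hgsq1 v u ((U.mem_neighborFinset v _).mp hu)
      · rw [hSvdef, Finset.mem_biUnion] at hu
        obtain ⟨w, hw, hu2⟩ := hu
        rw [Finset.mem_erase] at hu2
        exact hgsq2 v w u ((U.mem_neighborFinset v _).mp hw)
          ((U.mem_neighborFinset w _).mp hu2.2) hu2.1
    calc U.degree v + ∑ w ∈ Nv, (U.degree w - 1) = Nv.card + Sv.card := by rw [hSv]; rfl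
      _ = (Nv ∪ Sv).card := (Finset.card_union_of_disjoint hdisj).symm
      _ ≤ (Finset.univ.filter (fun u => (gsq U).Adj v u)).card := Finset.card_le_card hsub
      _ = deg (gsq U) v := rfl
  -- handshake
  have hhand : ∑ v, U.degree v = 2 * n := by
    rw [SimpleGraph.sum_degrees_eq_twice_card_edges]
    have : U.edgeSet.ncard = U.edgeFinset.card := Set.ncard_eq_toFinset_card' _
    rw [← this, hcardE, Fintype.card_fin]
  -- double counting
  have hdouble : ∑ v, ∑ w ∈ U.neighborFinset v, (U.degree w - 1)
      = ∑ w, U.degree w * (U.degree w - 1) := by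
    have hfil : ∀ w : Fin n, (Finset.univ.filter (fun v => U.Adj v w)) = U.neighborFinset w := by
      intro w
      rw [SimpleGraph.neighborFinset_eq_filter]
      apply Finset.filter_congr
      intro v _
      simp [SimpleGraph.adj_comm]
    calc ∑ v, ∑ w ∈ U.neighborFinset v, (U.degree w - 1)
        = ∑ v, ∑ w, if U.Adj v w then (U.degree w - 1) else 0 := by
          refine Finset.sum_congr rfl (fun v _ => ?_)
          rw [SimpleGraph.neighborFinset_eq_filter, Finset.sum_filter]
      _ = ∑ w, ∑ v, if U.Adj v w then (U.degree w - 1) else 0 := Finset.sum_comm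
      _ = ∑ w, U.degree w * (U.degree w - 1) := by
          refine Finset.sum_congr rfl (fun w _ => ?_)
          rw [← Finset.sum_filter, hfil w, Finset.sum_const, smul_eq_mul]
          rfl
  -- a vertex of degree ≥ 3
  have hd3 : ∃ u, 3 ≤ U.degree u := by
    obtain ⟨a, c, hc, hlen⟩ := (SimpleGraph.exists_girth_eq_length).mpr hacyc
    apply aux_deg3 hconn c hc
    rw [Fintype.card_fin, ← hlen]
    omega
  -- min degree 1
  have hdpos : ∀ v, 1 ≤ U.degree v := by
    intro v
    have h1 : ∃ u : Fin n, u ≠ v := by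
      apply Fintype.exists_ne_of_one_lt_card
      rw [Fintype.card_fin]; omega
    obtain ⟨u, hune⟩ := h1
    obtain ⟨p⟩ := hconn.preconnected v u
    cases p with
    | nil => exact absurd rfl hune
    | cons h q => exact (U.degree_pos_iff_exists_adj v).mpr ⟨_, h⟩
  -- the quadratic sum bound
  have hquad : 2 * n + 1 ≤ ∑ w, U.degree w * (U.degree w - 1) := by
    obtain ⟨u0, hu0⟩ := hd3
    have hlt : ∑ w, 2 * (U.degree w - 1) < ∑ w, U.degree w * (U.degree w - 1) := by
      apply Finset.sum_lt_sum
      · intro i _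
        by_cases h : U.degree i ≤ 1
        · have : U.degree i - 1 = 0 := by omega
          simp [this]
        · exact Nat.mul_le_mul_right _ (by omega)
      · refine ⟨u0, Finset.mem_univ u0, ?_⟩
        have h1 : 0 < U.degree u0 - 1 := by omega
        exact (Nat.mul_lt_mul_right h1).mpr (by omega)
    have hsum1 : ∑ w : Fin n, (U.degree w - 1) = n := by
      have he : ∑ w : Fin n, (U.degree w - 1 + 1) = ∑ w, U.degree w :=
        Finset.sum_congr rfl (fun w _ => by have := hdpos w; omega)
      rw [Finset.sum_add_distrib] at he
      simp only [Finset.sum_const, Finset.card_univ, Fintype.card_fin, smul_eq_mul, mul_one] at he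
      omega
    have hsum2 : ∑ w : Fin n, 2 * (U.degree w - 1) = 2 * n := by
      rw [← Finset.mul_sum, hsum1]
    omega
  -- total
  have htot : 4 * n + 1 ≤ ∑ v, deg (gsq U) v := by
    calc 4 * n + 1 = 2 * n + (2 * n + 1) := by ring
      _ ≤ (∑ v, U.degree v) + ∑ w, U.degree w * (U.degree w - 1) :=
          add_le_add (le_of_eq hhand.symm) hquad
      _ = ∑ v, (U.degree v + ∑ w ∈ U.neighborFinset v, (U.degree w - 1)) := by
          rw [← hdouble, ← Finset.sum_add_distrib]
      _ ≤ ∑ v, deg (gsq U) v := Finset.sum_le_sum (fun v _ => key v)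
  rw [avgDeg, Fintype.card_fin]
  have hn0 : (0 : ℝ) < n := by exact_mod_cast Nat.lt_of_lt_of_le (by norm_num) hn
  rw [lt_div_iff₀ hn0]
  have hcast : (4 * n + 1 : ℝ) ≤ ∑ v, (deg (gsq U) v : ℝ) := by
    have := htot
    push_cast
    exact_mod_cast this
  linarith
end
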